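/- arXiv:1810.02532 — 8 statements merged into one kernel-verified Lean document; each statement's English description precedes it below -/
import Mathlib

section
/- Let Ã be an n×n Hermitian matrix of the 3×3 block form Ã = [[Λ̂₁, 0, R₁*],[0, Λ̂₂, R₂*],[R₁, R₂, A₃]] as described. Suppose X̃₁ ∈ ℂ^{n×k₁} has orthonormal columns and satisfies ÃX̃₁ = X̃₁Λ₁ for a real diagonal k₁×k₁ matrix Λ₁, and partition its rows conformally as X̃₁ = (W; Y; Z) with W ∈ ℂ^{k₁×k₁}, Y ∈ ℂ^{(k−k₁)×k₁}, Z ∈ ℂ^{(n−k)×k₁}. Assume Gap > 0 and gap > 0. Then ‖[Y; Z]‖_F ≤ (‖R‖_F/Gap) · √(1 + ‖R₂‖²/gap²), where ‖[Y; Z]‖_F is the Frobenius norm of the stacked matrix with blocks Y and Z. -/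
open Matrix
open scoped Matrix.Norms.L2Operator

/-- The Frobenius norm of a complex matrix, written explicitly. -/
noncomputable def frobNorm {α β : Type*} [Fintype α] [Fintype β] (M : Matrix α β ℂ) : ℝ :=
  Real.sqrt (∑ i, ∑ j, ‖M i j‖ ^ 2)

lemma sbf_star_dot_self {ι : Type*} [Fintype ι] (v : ι → ℂ) :
    star v ⬝ᵥ v = ((∑ i, ‖v i‖ ^ 2 : ℝ) : ℂ) := by
  rw [dotProduct, Complex.ofReal_sum]
  refine Finset.sum_congr rfl fun i _ => ?_
  simp [Pi.star_apply, mul_comm, Complex.mul_conj']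

/-- Cauchy–Schwarz for the complex dot product. -/
lemma sbf_dot_cs {ι : Type*} [Fintype ι] (u v : ι → ℂ) :
    ‖star u ⬝ᵥ v‖ ≤ Real.sqrt (∑ i, ‖u i‖ ^ 2) * Real.sqrt (∑ i, ‖v i‖ ^ 2) := by
  have h1 : ‖star u ⬝ᵥ v‖ ≤ ∑ i, ‖u i‖ * ‖v i‖ := by
    refine (norm_sum_le _ _).trans ?_
    refine Finset.sum_le_sum fun i _ => ?_
    simp [Pi.star_apply, norm_mul]
  refine h1.trans ?_
  have h2 := Finset.sum_mul_sq_le_sq_mul_sq Finset.univ (fun i => ‖u i‖) (fun i => ‖v i‖)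
  have h3 : 0 ≤ ∑ i, ‖u i‖ * ‖v i‖ :=
    Finset.sum_nonneg fun i _ => mul_nonneg (norm_nonneg _) (norm_nonneg _)
  calc ∑ i, ‖u i‖ * ‖v i‖ = Real.sqrt ((∑ i, ‖u i‖ * ‖v i‖) ^ 2) := (Real.sqrt_sq h3).symm
    _ ≤ Real.sqrt ((∑ i, ‖u i‖ ^ 2) * ∑ i, ‖v i‖ ^ 2) := Real.sqrt_le_sqrt h2
    _ = _ := Real.sqrt_mul (Finset.sum_nonneg fun i _ => sq_nonneg _) _

/-- multiplication by a matrix with `Uᴴ * U = 1` preserves the sum of squares. -/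
lemma sbf_isometry_sq {ι κ : Type*} [Fintype ι] [Fintype κ] [DecidableEq κ]
    (U : Matrix ι κ ℂ) (hU : Uᴴ * U = 1) (w : κ → ℂ) :
    ∑ p, ‖(U *ᵥ w) p‖ ^ 2 = ∑ j, ‖w j‖ ^ 2 := by
  have h : star (U *ᵥ w) ⬝ᵥ (U *ᵥ w) = star w ⬝ᵥ w := by
    rw [star_mulVec, dotProduct_mulVec, vecMul_vecMul, hU, vecMul_one]
  rw [sbf_star_dot_self, sbf_star_dot_self] at h
  exact_mod_cast h

/-- For a matrix with orthonormal columns, `‖Xᴴ u‖ ≤ ‖u‖` (squared form). -/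
lemma sbf_conjT_contract {ι κ : Type*} [Fintype ι] [Fintype κ] [DecidableEq κ]
    (X : Matrix ι κ ℂ) (hX : Xᴴ * X = 1) (u : ι → ℂ) :
    ∑ j, ‖(Xᴴ *ᵥ u) j‖ ^ 2 ≤ ∑ i, ‖u i‖ ^ 2 := by
  set w : κ → ℂ := Xᴴ *ᵥ u with hw
  have hXw : ∑ i, ‖(X *ᵥ w) i‖ ^ 2 = ∑ j, ‖w j‖ ^ 2 := sbf_isometry_sq X hX w
  have key : star w ⬝ᵥ w = star (X *ᵥ w) ⬝ᵥ u := by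
    nth_rewrite 2 [hw]
    rw [dotProduct_mulVec]
    conv_rhs => rw [star_mulVec]
  set s := ∑ j, ‖w j‖ ^ 2 with hsdef
  set t := ∑ i, ‖u i‖ ^ 2 with htdef
  have hs : 0 ≤ s := Finset.sum_nonneg fun _ _ => sq_nonneg _
  have ht : 0 ≤ t := Finset.sum_nonneg fun _ _ => sq_nonneg _
  have h5 : s ≤ Real.sqrt s * Real.sqrt t := by
    calc s = ‖((s : ℝ) : ℂ)‖ := by rw [Complex.norm_real, Real.norm_of_nonneg hs]
      _ = ‖star (X *ᵥ w) ⬝ᵥ u‖ := by rw [← key, sbf_star_dot_self]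
      _ ≤ Real.sqrt (∑ i, ‖(X *ᵥ w) i‖ ^ 2) * Real.sqrt t := sbf_dot_cs _ _
      _ = Real.sqrt s * Real.sqrt t := by rw [hXw]
  nlinarith [Real.sq_sqrt hs, Real.sq_sqrt ht, mul_self_nonneg (Real.sqrt s - Real.sqrt t)]


lemma sbf_opnorm_mulVec_sq {α β : Type*} [Fintype α] [Fintype β] [DecidableEq β]
    (M : Matrix α β ℂ) (x : β → ℂ) :
    ∑ a, ‖(M *ᵥ x) a‖ ^ 2 ≤ ‖M‖ ^ 2 * ∑ b, ‖x b‖ ^ 2 := by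
  have h := M.l2_opNorm_mulVec ((WithLp.equiv 2 (β → ℂ)).symm x)
  rw [EuclideanSpace.norm_eq, EuclideanSpace.norm_eq] at h
  have h' : Real.sqrt (∑ a, ‖(M *ᵥ x) a‖ ^ 2) ≤ ‖M‖ * Real.sqrt (∑ b, ‖x b‖ ^ 2) := h
  have hs : 0 ≤ ∑ a, ‖(M *ᵥ x) a‖ ^ 2 := Finset.sum_nonneg fun _ _ => sq_nonneg _
  have ht : 0 ≤ ∑ b, ‖x b‖ ^ 2 := Finset.sum_nonneg fun _ _ => sq_nonneg _
  calc ∑ a, ‖(M *ᵥ x) a‖ ^ 2 = Real.sqrt (∑ a, ‖(M *ᵥ x) a‖ ^ 2) ^ 2 := (Real.sq_sqrt hs).symm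
    _ ≤ (‖M‖ * Real.sqrt (∑ b, ‖x b‖ ^ 2)) ^ 2 := by
        exact pow_le_pow_left₀ (Real.sqrt_nonneg _) h' 2
    _ = ‖M‖ ^ 2 * ∑ b, ‖x b‖ ^ 2 := by rw [mul_pow, Real.sq_sqrt ht]

lemma sbf_gap_bound {m : Type*} [Fintype m] [DecidableEq m]
    {A : Matrix m m ℂ} (hA : A.IsHermitian) (lam g : ℝ) (hg0 : 0 ≤ g)
    (hg : ∀ j, g ≤ |lam - hA.eigenvalues j|) (v : m → ℂ) :
    g ^ 2 * ∑ p, ‖v p‖ ^ 2 ≤ ∑ p, ‖(A *ᵥ v - (lam : ℂ) • v) p‖ ^ 2 := by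
  set U : Matrix m m ℂ := (hA.eigenvectorUnitary : Matrix m m ℂ) with hUdef
  have hU1 : Uᴴ * U = 1 := by
    have := (Matrix.mem_unitaryGroup_iff').mp (hA.eigenvectorUnitary).2
    rwa [star_eq_conjTranspose] at this
  have hU2 : U * Uᴴ = 1 := by
    have := (Matrix.mem_unitaryGroup_iff).mp (hA.eigenvectorUnitary).2
    rwa [star_eq_conjTranspose] at this
  set w : m → ℂ := Uᴴ *ᵥ v with hwdef
  have h1 : v = U *ᵥ w := by rw [hwdef, mulVec_mulVec, hU2, one_mulVec]
  set wfun : m → ℂ := fun j => ((hA.eigenvalues j - lam : ℝ) : ℂ) * w j with hwf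
  have h2 : A *ᵥ v - (lam : ℂ) • v = U *ᵥ wfun := by
    have hAv : A *ᵥ v = U *ᵥ (Matrix.diagonal (RCLike.ofReal ∘ hA.eigenvalues) *ᵥ w) := by
      conv_lhs => rw [hA.spectral_theorem]
      rw [Unitary.conjStarAlgAut_apply, star_eq_conjTranspose, ← mulVec_mulVec, ← mulVec_mulVec]
    have hlv : (lam : ℂ) • v = U *ᵥ ((lam : ℂ) • w) := by
      rw [h1, mulVec_smul]
    have hd : Matrix.diagonal (RCLike.ofReal ∘ hA.eigenvalues) *ᵥ w - (lam : ℂ) • w = wfun := by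
      funext j
      simp only [Pi.sub_apply, Pi.smul_apply, mulVec_diagonal, Function.comp_apply, smul_eq_mul,
        hwf]
      have : (RCLike.ofReal (hA.eigenvalues j) : ℂ) = ((hA.eigenvalues j : ℝ) : ℂ) := rfl
      rw [this]
      push_cast
      ring
    rw [hAv, hlv, ← mulVec_sub, hd]
  calc g ^ 2 * ∑ p, ‖v p‖ ^ 2 = g ^ 2 * ∑ j, ‖w j‖ ^ 2 := by
        rw [h1, sbf_isometry_sq U hU1 w]
    _ = ∑ j, g ^ 2 * ‖w j‖ ^ 2 := Finset.mul_sum _ _ _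
    _ ≤ ∑ j, ‖wfun j‖ ^ 2 := by
        refine Finset.sum_le_sum fun j _ => ?_
        have habs : g ≤ |hA.eigenvalues j - lam| := by
          rw [abs_sub_comm]; exact hg j
        have hwj : ‖wfun j‖ ^ 2 = |hA.eigenvalues j - lam| ^ 2 * ‖w j‖ ^ 2 := by
          show ‖((hA.eigenvalues j - lam : ℝ) : ℂ) * w j‖ ^ 2 = _
          rw [norm_mul, Complex.norm_real, Real.norm_eq_abs, mul_pow]
        rw [hwj]
        exact mul_le_mul_of_nonneg_right (pow_le_pow_left₀ hg0 habs 2) (sq_nonneg _)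
    _ = ∑ p, ‖(U *ᵥ wfun) p‖ ^ 2 := (sbf_isometry_sq U hU1 wfun).symm
    _ = ∑ p, ‖(A *ᵥ v - (lam : ℂ) • v) p‖ ^ 2 := by rw [h2]

/-- Theorem 5.1, bound (5.2) (Frobenius-norm version) of the paper:
`‖[Y; Z]‖_F ≤ (‖R‖_F/Gap) · √(1 + ‖R₂‖²/gap²)`. -/
theorem subspace_bound_frobenius
    {k n k₁ : ℕ} (hk : 2 ≤ k) (hkn : k ≤ n) (hk₁ : 1 ≤ k₁) (hk₁k : k₁ < k)
    (lamhat1 : Fin k₁ → ℝ) (lamhat2 : Fin (k - k₁) → ℝ)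
    (R : Matrix (Fin (n - k)) (Fin k₁ ⊕ Fin (k - k₁)) ℂ)
    (A3 : Matrix (Fin (n - k)) (Fin (n - k)) ℂ) (hA3 : A3.IsHermitian)
    (X : Matrix ((Fin k₁ ⊕ Fin (k - k₁)) ⊕ Fin (n - k)) (Fin k₁) ℂ)
    (hX : Xᴴ * X = 1)
    (Lam1 : Fin k₁ → ℝ)
    (heig :
      (Matrix.fromBlocks
          (Matrix.diagonal fun i => Complex.ofReal (Sum.elim lamhat1 lamhat2 i))
          Rᴴ R A3) * X = X * Matrix.diagonal fun i => Complex.ofReal (Lam1 i))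
    (Gap gap : ℝ)
    (hGapDef : Gap = ⨅ i, ⨅ j, |Lam1 i - hA3.eigenvalues j|)
    (hgapDef : gap = ⨅ i, ⨅ j, |Lam1 i - lamhat2 j|)
    (hGap : 0 < Gap) (hgap : 0 < gap) :
    frobNorm (X.submatrix (Sum.elim (fun i => Sum.inl (Sum.inr i)) Sum.inr) id) ≤
      (frobNorm R / Gap) * Real.sqrt (1 + ‖R.submatrix id Sum.inr‖ ^ 2 / gap ^ 2) := by
  -- index abbreviations
  set ci : Fin k₁ → (Fin k₁ ⊕ Fin (k - k₁)) → ℂ := fun i q => X (Sum.inl q) i with hci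
  set zi : Fin k₁ → Fin (n - k) → ℂ := fun i p => X (Sum.inr p) i with hzi
  set SZ : ℝ := ∑ i, ∑ p, ‖X (Sum.inr p) i‖ ^ 2 with hSZ
  set SY : ℝ := ∑ i, ∑ j, ‖X (Sum.inl (Sum.inr j)) i‖ ^ 2 with hSY
  set fR : ℝ := ∑ p, ∑ q, ‖R p q‖ ^ 2 with hfR
  set b : ℝ := ‖R.submatrix id Sum.inr‖ with hb
  have hSZ0 : 0 ≤ SZ := Finset.sum_nonneg fun _ _ => Finset.sum_nonneg fun _ _ => sq_nonneg _
  have hSY0 : 0 ≤ SY := Finset.sum_nonneg fun _ _ => Finset.sum_nonneg fun _ _ => sq_nonneg _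
  have hfR0 : 0 ≤ fR := Finset.sum_nonneg fun _ _ => Finset.sum_nonneg fun _ _ => sq_nonneg _
  have hb0 : 0 ≤ b := norm_nonneg _
  -- extracting gap inequalities
  have hGapi : ∀ i jj, Gap ≤ |Lam1 i - hA3.eigenvalues jj| := by
    intro i jj
    have h1 : Gap ≤ ⨅ j, |Lam1 i - hA3.eigenvalues j| := by
      rw [hGapDef]
      refine ciInf_le ⟨0, ?_⟩ i
      rintro x ⟨i', rfl⟩
      exact Real.iInf_nonneg fun j => abs_nonneg _
    exact h1.trans (ciInf_le ⟨0, by rintro x ⟨j', rfl⟩; exact abs_nonneg _⟩ jj)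
  have hgapi : ∀ i j, gap ≤ |Lam1 i - lamhat2 j| := by
    intro i j
    have h1 : gap ≤ ⨅ j, |Lam1 i - lamhat2 j| := by
      rw [hgapDef]
      refine ciInf_le ⟨0, ?_⟩ i
      rintro x ⟨i', rfl⟩
      exact Real.iInf_nonneg fun j => abs_nonneg _
    exact h1.trans (ciInf_le ⟨0, by rintro x ⟨j', rfl⟩; exact abs_nonneg _⟩ j)
  -- block equation, third block row
  have h3 : ∀ i, A3 *ᵥ (zi i) - ((Lam1 i : ℝ) : ℂ) • (zi i) = -(R *ᵥ (ci i)) := by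
    intro i
    funext p
    have h := congrFun (congrFun heig (Sum.inr p)) i
    rw [Matrix.mul_diagonal] at h
    simp only [Matrix.mul_apply, Fintype.sum_sum_type, Matrix.fromBlocks_apply₂₁,
      Matrix.fromBlocks_apply₂₂] at h
    simp only [Pi.sub_apply, Pi.smul_apply, Pi.neg_apply, Matrix.mulVec, dotProduct,
      Fintype.sum_sum_type, smul_eq_mul, hci, hzi]
    linear_combination h
  -- block equation, second block row
  have h2 : ∀ i j, (((Lam1 i : ℝ) : ℂ) - ((lamhat2 j : ℝ) : ℂ)) * X (Sum.inl (Sum.inr j)) i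
      = ((R.submatrix id Sum.inr)ᴴ *ᵥ (zi i)) j := by
    intro i j
    have h := congrFun (congrFun heig (Sum.inl (Sum.inr j))) i
    rw [Matrix.mul_diagonal] at h
    simp only [Matrix.mul_apply, Fintype.sum_sum_type, Matrix.fromBlocks_apply₁₁,
      Matrix.fromBlocks_apply₁₂, Matrix.conjTranspose_apply,
      Matrix.diagonal_apply, Sum.inr.injEq, Sum.elim_inr, Sum.elim_inl,
      mul_ite, ite_mul, zero_mul, mul_zero, Finset.sum_ite_eq, Finset.mem_univ, if_true,
      Finset.sum_const_zero, reduceCtorEq, zero_add, add_zero] at h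
    simp only [Matrix.mulVec, dotProduct, Matrix.conjTranspose_apply, Matrix.submatrix_apply,
      id_eq, hzi]
    linear_combination -h
  -- Z bound
  have keyZ : Gap ^ 2 * SZ ≤ fR := by
    have step1 : ∀ i, Gap ^ 2 * ∑ p, ‖zi i p‖ ^ 2 ≤ ∑ p, ‖(R *ᵥ ci i) p‖ ^ 2 := by
      intro i
      refine (sbf_gap_bound hA3 (Lam1 i) Gap hGap.le (hGapi i) (zi i)).trans ?_
      rw [h3 i]
      refine le_of_eq (Finset.sum_congr rfl fun p _ => ?_)
      rw [Pi.neg_apply, norm_neg]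
    have step2 : ∑ i, ∑ p, ‖(R *ᵥ ci i) p‖ ^ 2 ≤ fR := by
      rw [Finset.sum_comm, hfR]
      refine Finset.sum_le_sum fun p _ => ?_
      set u : ((Fin k₁ ⊕ Fin (k - k₁)) ⊕ Fin (n - k)) → ℂ :=
        Sum.elim (fun q => star (R p q)) 0 with hu
      have hXu : ∀ i, (Xᴴ *ᵥ u) i = star ((R *ᵥ ci i) p) := by
        intro i
        simp only [Matrix.mulVec, dotProduct, Matrix.conjTranspose_apply, hu,
          Fintype.sum_sum_type, Sum.elim_inl, Sum.elim_inr, Pi.zero_apply, mul_zero,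
          Finset.sum_const_zero, add_zero, hci]
        simp [star_sum, star_mul', mul_comm]
      calc ∑ i, ‖(R *ᵥ ci i) p‖ ^ 2 = ∑ i, ‖(Xᴴ *ᵥ u) i‖ ^ 2 := by
            refine Finset.sum_congr rfl fun i _ => ?_
            rw [hXu i, norm_star]
        _ ≤ ∑ Q, ‖u Q‖ ^ 2 := sbf_conjT_contract X hX u
        _ = ∑ q, ‖R p q‖ ^ 2 := by
            simp [hu, Fintype.sum_sum_type]
    calc Gap ^ 2 * SZ = ∑ i, Gap ^ 2 * ∑ p, ‖zi i p‖ ^ 2 := by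
          rw [hSZ, Finset.mul_sum]
      _ ≤ ∑ i, ∑ p, ‖(R *ᵥ ci i) p‖ ^ 2 := Finset.sum_le_sum fun i _ => step1 i
      _ ≤ fR := step2
  -- Y bound
  have keyY : gap ^ 2 * SY ≤ b ^ 2 * SZ := by
    have stepi : ∀ i, gap ^ 2 * ∑ j, ‖X (Sum.inl (Sum.inr j)) i‖ ^ 2
        ≤ b ^ 2 * ∑ p, ‖X (Sum.inr p) i‖ ^ 2 := by
      intro i
      have hstep : ∀ j, gap ^ 2 * ‖X (Sum.inl (Sum.inr j)) i‖ ^ 2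
          ≤ ‖((R.submatrix id Sum.inr)ᴴ *ᵥ zi i) j‖ ^ 2 := by
        intro j
        have h := h2 i j
        have hnorm : ‖((R.submatrix id Sum.inr)ᴴ *ᵥ zi i) j‖
            = |Lam1 i - lamhat2 j| * ‖X (Sum.inl (Sum.inr j)) i‖ := by
          rw [← h, norm_mul]
          congr 1
          rw [show ((Lam1 i : ℝ) : ℂ) - ((lamhat2 j : ℝ) : ℂ)
              = ((Lam1 i - lamhat2 j : ℝ) : ℂ) by push_cast; ring]
          rw [Complex.norm_real, Real.norm_eq_abs]
        rw [hnorm, mul_pow]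
        exact mul_le_mul_of_nonneg_right (pow_le_pow_left₀ hgap.le (hgapi i j) 2) (sq_nonneg _)
      calc gap ^ 2 * ∑ j, ‖X (Sum.inl (Sum.inr j)) i‖ ^ 2
          = ∑ j, gap ^ 2 * ‖X (Sum.inl (Sum.inr j)) i‖ ^ 2 := Finset.mul_sum _ _ _
        _ ≤ ∑ j, ‖((R.submatrix id Sum.inr)ᴴ *ᵥ zi i) j‖ ^ 2 :=
            Finset.sum_le_sum fun j _ => hstep j
        _ ≤ ‖(R.submatrix id Sum.inr)ᴴ‖ ^ 2 * ∑ p, ‖zi i p‖ ^ 2 :=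
            sbf_opnorm_mulVec_sq _ _
        _ = b ^ 2 * ∑ p, ‖X (Sum.inr p) i‖ ^ 2 := by
            rw [Matrix.l2_opNorm_conjTranspose, ← hb]
    calc gap ^ 2 * SY = ∑ i, gap ^ 2 * ∑ j, ‖X (Sum.inl (Sum.inr j)) i‖ ^ 2 := by
          rw [hSY, Finset.mul_sum]
      _ ≤ ∑ i, b ^ 2 * ∑ p, ‖X (Sum.inr p) i‖ ^ 2 := Finset.sum_le_sum fun i _ => stepi i
      _ = b ^ 2 * SZ := by rw [hSZ, Finset.mul_sum]
  -- numeric assembly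
  have hmain : SY + SZ ≤ (fR / Gap ^ 2) * (1 + b ^ 2 / gap ^ 2) := by
    have hG2 : (0:ℝ) < Gap ^ 2 := by positivity
    have hg2 : (0:ℝ) < gap ^ 2 := by positivity
    have h1 : SZ ≤ fR / Gap ^ 2 := by
      rw [le_div_iff₀ hG2]; linarith [keyZ]
    have hy : SY ≤ b ^ 2 * SZ / gap ^ 2 := by
      rw [le_div_iff₀ hg2]; linarith [keyY]
    have h3' : SY + SZ ≤ SZ * (1 + b ^ 2 / gap ^ 2) := by
      have he : SZ * (1 + b ^ 2 / gap ^ 2) = SZ + b ^ 2 * SZ / gap ^ 2 := by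
        field_simp
      rw [he]; linarith
    refine h3'.trans (mul_le_mul_of_nonneg_right h1 ?_)
    positivity
  -- rewrite the goal
  have hL : frobNorm (X.submatrix (Sum.elim (fun i => Sum.inl (Sum.inr i)) Sum.inr) id)
      = Real.sqrt (SY + SZ) := by
    rw [frobNorm]
    congr 1
    rw [Fintype.sum_sum_type]
    simp only [Matrix.submatrix_apply, id_eq, Sum.elim_inl, Sum.elim_inr]
    rw [hSY, hSZ, Finset.sum_comm (f := fun j i => ‖X (Sum.inl (Sum.inr j)) i‖ ^ 2),
      Finset.sum_comm (f := fun p i => ‖X (Sum.inr p) i‖ ^ 2)]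
  have hRn : frobNorm R = Real.sqrt fR := by rw [frobNorm, hfR]
  rw [hL, hRn]
  calc Real.sqrt (SY + SZ) ≤ Real.sqrt ((fR / Gap ^ 2) * (1 + b ^ 2 / gap ^ 2)) :=
        Real.sqrt_le_sqrt hmain
    _ = (Real.sqrt fR / Gap) * Real.sqrt (1 + b ^ 2 / gap ^ 2) := by
        have hq : (0:ℝ) ≤ fR / Gap ^ 2 := div_nonneg hfR0 (sq_nonneg _)
        rw [Real.sqrt_mul hq, Real.sqrt_div hfR0, Real.sqrt_sq hGap.le]
end

section
/- Let Ã be an n×n Hermitian matrix of the 3×3 block form Ã = [[Λ̂₁, 0, R₁*],[0, Λ̂₂, R₂*],[R₁, R₂, A₃]] as described. Suppose X̃₁ ∈ ℂ^{n×k₁} has orthonormal columns and satisfies ÃX̃₁ = X̃₁Λ₁ for a real diagonal k₁×k₁ matrix Λ₁, and partition its rows conformally as X̃₁ = (W; Y; Z). Assume gap > 0 and Gap > ‖R₂‖²/gap. Then ‖[Y; Z]‖_F ≤ (‖R₁‖_F / (Gap − ‖R₂‖²/gap)) · √(1 + ‖R₂‖²/gap²). -/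
open Matrix
open scoped Matrix.Norms.L2Operator

namespace SRB

variable {α β γ : Type*} [Fintype α] [Fintype β] [Fintype γ]

noncomputable def fro2 (M : Matrix α β ℂ) : ℝ := ∑ i, ∑ j, ‖M i j‖ ^ 2

lemma fro2_nonneg (M : Matrix α β ℂ) : 0 ≤ fro2 M := by
  apply Finset.sum_nonneg; intro i _; apply Finset.sum_nonneg; intro j _; positivity

lemma frobNorm_eq (M : Matrix α β ℂ) : frobNorm M = Real.sqrt (fro2 M) := rfl

lemma frobNorm_nonneg (M : Matrix α β ℂ) : 0 ≤ frobNorm M := Real.sqrt_nonneg _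

lemma sq_frobNorm (M : Matrix α β ℂ) : frobNorm M ^ 2 = fro2 M :=
  Real.sq_sqrt (fro2_nonneg M)

lemma sumSq (v : α → ℂ) : ∑ i, ‖v i‖ ^ 2 = (dotProduct (star v) v).re := by
  rw [dotProduct, Complex.re_sum]
  refine Finset.sum_congr rfl fun i _ => ?_
  simp [Pi.star_apply, ← Complex.normSq_eq_norm_sq, Complex.normSq_apply]

lemma fro2_eq_re_trace [DecidableEq β] (M : Matrix α β ℂ) :
    fro2 M = (Matrix.trace (Mᴴ * M)).re := by
  rw [fro2, Finset.sum_comm, Matrix.trace, Complex.re_sum]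
  refine Finset.sum_congr rfl fun j _ => ?_
  rw [Matrix.diag_apply, Matrix.mul_apply, Complex.re_sum]
  refine Finset.sum_congr rfl fun i _ => ?_
  simp [Matrix.conjTranspose_apply, ← Complex.normSq_eq_norm_sq, Complex.normSq_apply]

lemma fro2_unitary_mul [DecidableEq α] [DecidableEq β] {U : Matrix α α ℂ}
    (hU : U ∈ Matrix.unitaryGroup α ℂ) (M : Matrix α β ℂ) :
    fro2 (Uᴴ * M) = fro2 M := by
  rw [fro2_eq_re_trace, fro2_eq_re_trace]
  have h1 : U * Uᴴ = 1 := by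
    simpa [Matrix.star_eq_conjTranspose] using (Matrix.mem_unitaryGroup_iff).mp hU
  have h2 : (Uᴴ * M)ᴴ * (Uᴴ * M) = Mᴴ * M := by
    calc (Uᴴ * M)ᴴ * (Uᴴ * M) = Mᴴ * (U * Uᴴ) * M := by
          rw [Matrix.conjTranspose_mul, Matrix.conjTranspose_conjTranspose,
            Matrix.mul_assoc, Matrix.mul_assoc, Matrix.mul_assoc]
      _ = Mᴴ * M := by rw [h1, Matrix.mul_one]
  rw [h2]

lemma frobNorm_eq_norm (M : Matrix α β ℂ) :
    frobNorm M = ‖(WithLp.equiv 2 (α × β → ℂ)).symm (fun p => M p.1 p.2)‖ := by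
  rw [EuclideanSpace.norm_eq, frobNorm]
  congr 1
  rw [Fintype.sum_prod_type]
  rfl

lemma frobNorm_add_le (A B : Matrix α β ℂ) :
    frobNorm (A + B) ≤ frobNorm A + frobNorm B := by
  rw [frobNorm_eq_norm, frobNorm_eq_norm, frobNorm_eq_norm]
  have h : (WithLp.equiv 2 (α × β → ℂ)).symm (fun p => (A + B) p.1 p.2)
      = (WithLp.equiv 2 (α × β → ℂ)).symm (fun p => A p.1 p.2)
        + (WithLp.equiv 2 (α × β → ℂ)).symm (fun p => B p.1 p.2) := by
    ext p
    simp [WithLp.equiv_symm_apply, PiLp.toLp_apply, Matrix.add_apply]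
  rw [h]
  exact norm_add_le _ _

lemma fro2_mul_le_left [DecidableEq β] (A : Matrix α β ℂ) (B : Matrix β γ ℂ) :
    fro2 (A * B) ≤ ‖A‖ ^ 2 * fro2 B := by
  rw [fro2, Finset.sum_comm, fro2, Finset.sum_comm (γ := β), Finset.mul_sum]
  refine Finset.sum_le_sum fun j _ => ?_
  set x : EuclideanSpace ℂ β := (WithLp.equiv 2 (β → ℂ)).symm (fun i => B i j) with hxdef
  have h := Matrix.l2_opNorm_mulVec A x
  have hx : ‖x‖ ^ 2 = ∑ i, ‖B i j‖ ^ 2 := by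
    rw [EuclideanSpace.norm_eq, Real.sq_sqrt (by positivity)]
    rfl
  have hAx : ‖(EuclideanSpace.equiv α ℂ).symm (A *ᵥ x)‖ ^ 2 = ∑ i, ‖(A * B) i j‖ ^ 2 := by
    rw [EuclideanSpace.norm_eq, Real.sq_sqrt (by positivity)]
    refine Finset.sum_congr rfl fun i _ => ?_
    congr 1
  calc ∑ i, ‖(A * B) i j‖ ^ 2
      = ‖(EuclideanSpace.equiv α ℂ).symm (A *ᵥ x)‖ ^ 2 := hAx.symm
    _ ≤ (‖A‖ * ‖x‖) ^ 2 := by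
        apply sq_le_sq' <;>
          nlinarith [norm_nonneg ((EuclideanSpace.equiv α ℂ).symm (A *ᵥ x)),
            norm_nonneg x, norm_nonneg A]
    _ = ‖A‖ ^ 2 * ∑ i, ‖B i j‖ ^ 2 := by rw [mul_pow, hx]

lemma fro2_conjTranspose (M : Matrix α β ℂ) : fro2 Mᴴ = fro2 M := by
  rw [fro2, fro2, Finset.sum_comm]
  exact Finset.sum_congr rfl fun i _ => Finset.sum_congr rfl fun j _ => by
    simp [Matrix.conjTranspose_apply]

lemma fro2_mul_le_right [DecidableEq β] [DecidableEq γ] (A : Matrix α β ℂ) (B : Matrix β γ ℂ) :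
    fro2 (A * B) ≤ fro2 A * ‖B‖ ^ 2 := by
  have h := fro2_mul_le_left Bᴴ Aᴴ
  rw [← Matrix.conjTranspose_mul] at h
  rw [fro2_conjTranspose, fro2_conjTranspose, Matrix.l2_opNorm_conjTranspose] at h
  rw [mul_comm]
  exact h

lemma fro2_le_of_forall {M N : Matrix α β ℂ} {c : ℝ} (hc : 0 ≤ c)
    (h : ∀ i j, c * ‖M i j‖ ≤ ‖N i j‖) : c ^ 2 * fro2 M ≤ fro2 N := by
  rw [fro2, fro2, Finset.mul_sum]
  refine Finset.sum_le_sum fun i _ => ?_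
  rw [Finset.mul_sum]
  refine Finset.sum_le_sum fun j _ => ?_
  calc c ^ 2 * ‖M i j‖ ^ 2 = (c * ‖M i j‖) ^ 2 := by ring
    _ ≤ ‖N i j‖ ^ 2 := pow_le_pow_left₀ (by positivity) (h i j) 2

lemma opNorm_row_submatrix_le_one {ι : Type*} [Fintype ι] [DecidableEq β] [DecidableEq α]
    (X : Matrix α β ℂ) (hX : Xᴴ * X = 1) (f : ι → α) (hf : Function.Injective f) :
    ‖X.submatrix f id‖ ≤ 1 := by
  rw [Matrix.l2_opNorm_def]
  refine ContinuousLinearMap.opNorm_le_bound _ zero_le_one fun x => ?_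
  rw [one_mul]
  show ‖(WithLp.equiv 2 (ι → ℂ)).symm ((X.submatrix f id) *ᵥ ((WithLp.equiv 2 (β → ℂ)) x))‖ ≤ ‖x‖
  rw [EuclideanSpace.norm_eq, EuclideanSpace.norm_eq]
  apply Real.sqrt_le_sqrt
  set v : β → ℂ := (WithLp.equiv 2 (β → ℂ)) x with hv
  have hXv : ∑ r, ‖(X *ᵥ v) r‖ ^ 2 = ∑ i, ‖v i‖ ^ 2 := by
    rw [sumSq, sumSq, Matrix.star_mulVec, Matrix.dotProduct_mulVec,
      Matrix.vecMul_vecMul, hX, Matrix.vecMul_one]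
  have hentry : ∀ w : ι, ((WithLp.equiv 2 (ι → ℂ)).symm ((X.submatrix f id) *ᵥ v)) w
      = (X *ᵥ v) (f w) := fun w => by
    simp [Matrix.mulVec, dotProduct, Matrix.submatrix_apply]
  calc ∑ w, ‖((WithLp.equiv 2 (ι → ℂ)).symm ((X.submatrix f id) *ᵥ v)) w‖ ^ 2
      = ∑ w, ‖(X *ᵥ v) (f w)‖ ^ 2 :=
        Finset.sum_congr rfl fun w _ => by rw [hentry]
    _ = ∑ r ∈ Finset.univ.image f, ‖(X *ᵥ v) r‖ ^ 2 := by
        rw [Finset.sum_image (fun a _ b _ h => hf h)]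
    _ ≤ ∑ r, ‖(X *ᵥ v) r‖ ^ 2 :=
        Finset.sum_le_sum_of_subset_of_nonneg (Finset.subset_univ _)
          (fun r _ _ => by positivity)
    _ = ∑ i, ‖v i‖ ^ 2 := hXv
    _ = ∑ i, ‖x i‖ ^ 2 := rfl

end SRB

open SRB

/-- Theorem 5.1, bound (5.3) of the paper: if `gap > 0` and `Gap > ‖R₂‖²/gap`, then
`‖[Y; Z]‖_F ≤ (‖R₁‖_F/(Gap − ‖R₂‖²/gap)) · √(1 + ‖R₂‖²/gap²)`. -/
theorem subspace_refined_bound_frobenius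
    {k n k₁ : ℕ} (hk : 2 ≤ k) (hkn : k ≤ n) (hk₁ : 1 ≤ k₁) (hk₁k : k₁ < k)
    (lamhat1 : Fin k₁ → ℝ) (lamhat2 : Fin (k - k₁) → ℝ)
    (R : Matrix (Fin (n - k)) (Fin k₁ ⊕ Fin (k - k₁)) ℂ)
    (A3 : Matrix (Fin (n - k)) (Fin (n - k)) ℂ) (hA3 : A3.IsHermitian)
    (X : Matrix ((Fin k₁ ⊕ Fin (k - k₁)) ⊕ Fin (n - k)) (Fin k₁) ℂ)
    (hX : Xᴴ * X = 1)
    (Lam1 : Fin k₁ → ℝ)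
    (heig :
      (Matrix.fromBlocks
          (Matrix.diagonal fun i => Complex.ofReal (Sum.elim lamhat1 lamhat2 i))
          Rᴴ R A3) * X = X * Matrix.diagonal fun i => Complex.ofReal (Lam1 i))
    (Gap gap : ℝ)
    (hGapDef : Gap = ⨅ i, ⨅ j, |Lam1 i - hA3.eigenvalues j|)
    (hgapDef : gap = ⨅ i, ⨅ j, |Lam1 i - lamhat2 j|)
    (hgap : 0 < gap)
    (hGap : ‖R.submatrix id Sum.inr‖ ^ 2 / gap < Gap) :
    frobNorm (X.submatrix (Sum.elim (fun i => Sum.inl (Sum.inr i)) Sum.inr) id) ≤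
      (frobNorm (R.submatrix id Sum.inl) / (Gap - ‖R.submatrix id Sum.inr‖ ^ 2 / gap)) *
        Real.sqrt (1 + ‖R.submatrix id Sum.inr‖ ^ 2 / gap ^ 2) := by
  classical
  set S := R.submatrix id Sum.inr with hSdef
  set R1 := R.submatrix id Sum.inl with hR1def
  set Y : Matrix (Fin (k - k₁)) (Fin k₁) ℂ :=
    Matrix.of (fun j i => X (Sum.inl (Sum.inr j)) i) with hYdef
  set Z : Matrix (Fin (n - k)) (Fin k₁) ℂ :=
    Matrix.of (fun l i => X (Sum.inr l) i) with hZdef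
  set W : Matrix (Fin k₁) (Fin k₁) ℂ :=
    Matrix.of (fun w i => X (Sum.inl (Sum.inl w)) i) with hWdef
  -- basic entrywise equations
  have eqY : ∀ (j : Fin (k - k₁)) (i : Fin k₁),
      X (Sum.inl (Sum.inr j)) i * ((Lam1 i : ℂ) - (lamhat2 j : ℂ))
        = ∑ l, (starRingEnd ℂ) (R l (Sum.inr j)) * X (Sum.inr l) i := by
    intro j i
    have h := congrFun (congrFun heig (Sum.inl (Sum.inr j))) i
    simp [Matrix.mul_apply, Fintype.sum_sum_type, Matrix.diagonal_apply, ite_mul, zero_mul,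
      Matrix.conjTranspose_apply, Finset.sum_ite_eq, Finset.sum_ite_eq'] at h
    linear_combination -h
  have eqZ : ∀ (l : Fin (n - k)) (i : Fin k₁),
      (∑ w, R l (Sum.inl w) * X (Sum.inl (Sum.inl w)) i)
        + (∑ w, R l (Sum.inr w) * X (Sum.inl (Sum.inr w)) i)
        + ∑ m, A3 l m * X (Sum.inr m) i
        = X (Sum.inr l) i * (Lam1 i : ℂ) := by
    intro l i
    have h := congrFun (congrFun heig (Sum.inr l)) i
    simp [Matrix.mul_apply, Fintype.sum_sum_type, Matrix.diagonal_apply, mul_ite, mul_zero,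
      Finset.sum_ite_eq, Finset.sum_ite_eq', Matrix.conjTranspose_apply] at h
    linear_combination h
  -- gap bounds
  have hgaple : ∀ (i : Fin k₁) (j : Fin (k - k₁)), gap ≤ |Lam1 i - lamhat2 j| := by
    intro i j
    rw [hgapDef]
    exact le_trans (ciInf_le (Finite.bddBelow_range _) i) (ciInf_le (Finite.bddBelow_range _) j)
  have hGaple : ∀ (i : Fin k₁) (l : Fin (n - k)), Gap ≤ |Lam1 i - hA3.eigenvalues l| := by
    intro i l
    rw [hGapDef]
    exact le_trans (ciInf_le (Finite.bddBelow_range _) i) (ciInf_le (Finite.bddBelow_range _) l)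
  have hGap0 : 0 < Gap := lt_of_le_of_lt (by positivity) hGap
  -- pointwise bound for Y
  have hYP : ∀ j i, gap * ‖Y j i‖ ≤ ‖(Sᴴ * Z) j i‖ := by
    intro j i
    have he : (Sᴴ * Z) j i = ∑ l, (starRingEnd ℂ) (R l (Sum.inr j)) * X (Sum.inr l) i := by
      simp [Matrix.mul_apply, Matrix.conjTranspose_apply, hSdef, hZdef,
        Matrix.submatrix_apply]
    rw [he, ← eqY j i, norm_mul]
    have hn : ‖((Lam1 i : ℂ) - (lamhat2 j : ℂ))‖ = |Lam1 i - lamhat2 j| := by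
      rw [← Complex.ofReal_sub, Complex.norm_real, Real.norm_eq_abs]
    rw [hn]
    calc gap * ‖Y j i‖ = ‖Y j i‖ * gap := by ring
      _ ≤ ‖Y j i‖ * |Lam1 i - lamhat2 j| :=
        mul_le_mul_of_nonneg_left (hgaple i j) (norm_nonneg _)
      _ = ‖X (Sum.inl (Sum.inr j)) i‖ * |Lam1 i - lamhat2 j| := rfl
  -- Frobenius bound for Y
  have h3 : gap * frobNorm Y ≤ ‖S‖ * frobNorm Z := by
    have hf : (gap * frobNorm Y) ^ 2 ≤ (‖S‖ * frobNorm Z) ^ 2 := by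
      rw [mul_pow, mul_pow, sq_frobNorm, sq_frobNorm]
      calc gap ^ 2 * fro2 Y ≤ fro2 (Sᴴ * Z) := fro2_le_of_forall hgap.le hYP
        _ ≤ ‖Sᴴ‖ ^ 2 * fro2 Z := fro2_mul_le_left _ _
        _ = ‖S‖ ^ 2 * fro2 Z := by rw [Matrix.l2_opNorm_conjTranspose]
    exact le_of_pow_le_pow_left₀ two_ne_zero (mul_nonneg (norm_nonneg S) (frobNorm_nonneg Z)) hf
  -- matrix equation for Z
  have hNB : Z * Matrix.diagonal (fun i => (Lam1 i : ℂ)) - A3 * Z = R1 * W + S * Y := by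
    ext l i
    have h := eqZ l i
    simp only [Matrix.sub_apply, Matrix.add_apply, Matrix.mul_apply, Matrix.diagonal_apply,
      mul_ite, mul_zero, Finset.sum_ite_eq, Finset.sum_ite_eq', Finset.mem_univ, if_true,
      hSdef, hR1def, hYdef, hZdef, hWdef, Matrix.submatrix_apply, Matrix.of_apply, id]
    linear_combination -h
  set N := R1 * W + S * Y with hNdef
  set U : Matrix (Fin (n - k)) (Fin (n - k)) ℂ :=
    (↑hA3.eigenvectorUnitary : Matrix (Fin (n - k)) (Fin (n - k)) ℂ) with hUdef
  have hUmem : U ∈ Matrix.unitaryGroup (Fin (n - k)) ℂ := hA3.eigenvectorUnitary.2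
  have hUU : Uᴴ * U = 1 := by
    simpa [Matrix.star_eq_conjTranspose] using (Matrix.mem_unitaryGroup_iff').mp hUmem
  have hUA3 : Uᴴ * A3 = Matrix.diagonal (RCLike.ofReal ∘ hA3.eigenvalues) * Uᴴ := by
    conv_lhs => rw [hA3.spectral_theorem]
    rw [Unitary.conjStarAlgAut_apply, ← hUdef, Matrix.star_eq_conjTranspose, ← Matrix.mul_assoc, ← Matrix.mul_assoc, hUU, Matrix.one_mul]
  have hC : ∀ l i, (Uᴴ * Z) l i * (Lam1 i : ℂ)
      - (hA3.eigenvalues l : ℂ) * ((Uᴴ * Z) l i) = (Uᴴ * N) l i := by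
    have hm : (Uᴴ * Z) * Matrix.diagonal (fun i => (Lam1 i : ℂ))
        - Matrix.diagonal (RCLike.ofReal ∘ hA3.eigenvalues) * (Uᴴ * Z) = Uᴴ * N := by
      have e1 : Uᴴ * (Z * Matrix.diagonal (fun i => (Lam1 i : ℂ)))
          = (Uᴴ * Z) * Matrix.diagonal (fun i => (Lam1 i : ℂ)) :=
        (Matrix.mul_assoc _ _ _).symm
      have e2 : Uᴴ * (A3 * Z)
          = Matrix.diagonal (RCLike.ofReal ∘ hA3.eigenvalues) * (Uᴴ * Z) := by
        rw [← Matrix.mul_assoc, hUA3, Matrix.mul_assoc]; rfl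
      rw [← e1, ← e2, ← Matrix.mul_sub, hNB]
    intro l i
    have h := congrFun (congrFun hm l) i
    erw [Matrix.sub_apply, Matrix.diagonal_mul] at h
    simpa [Matrix.sub_apply, Matrix.mul_diagonal, Matrix.diagonal_mul] using h
  -- pointwise bound for Z
  have hZP : ∀ l i, Gap * ‖(Uᴴ * Z) l i‖ ≤ ‖(Uᴴ * N) l i‖ := by
    intro l i
    rw [← hC l i]
    have hre : (Uᴴ * Z) l i * (Lam1 i : ℂ) - (hA3.eigenvalues l : ℂ) * ((Uᴴ * Z) l i)
        = (Uᴴ * Z) l i * ((Lam1 i : ℂ) - (hA3.eigenvalues l : ℂ)) := by ring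
    rw [hre, norm_mul]
    have hn : ‖((Lam1 i : ℂ) - (hA3.eigenvalues l : ℂ))‖ = |Lam1 i - hA3.eigenvalues l| := by
      rw [← Complex.ofReal_sub, Complex.norm_real, Real.norm_eq_abs]
    rw [hn]
    calc Gap * ‖(Uᴴ * Z) l i‖ = ‖(Uᴴ * Z) l i‖ * Gap := by ring
      _ ≤ ‖(Uᴴ * Z) l i‖ * |Lam1 i - hA3.eigenvalues l| :=
        mul_le_mul_of_nonneg_left (hGaple i l) (norm_nonneg _)
  -- Frobenius bound for Z
  have h1 : Gap ^ 2 * fro2 Z ≤ fro2 N := by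
    calc Gap ^ 2 * fro2 Z = Gap ^ 2 * fro2 (Uᴴ * Z) := by rw [fro2_unitary_mul hUmem]
      _ ≤ fro2 (Uᴴ * N) := fro2_le_of_forall hGap0.le hZP
      _ = fro2 N := fro2_unitary_mul hUmem N
  have hGz : Gap * frobNorm Z ≤ frobNorm N := by
    apply le_of_pow_le_pow_left₀ two_ne_zero (frobNorm_nonneg N)
    rw [mul_pow, sq_frobNorm, sq_frobNorm]
    exact h1
  -- bound on N
  have hW1 : ‖W‖ ≤ 1 := by
    have hWs : W = X.submatrix (fun w : Fin k₁ => Sum.inl (Sum.inl w)) id := by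
      ext w i; simp [hWdef, Matrix.submatrix_apply]
    rw [hWs]
    exact opNorm_row_submatrix_le_one X hX _ (fun a b h => by simpa using h)
  have hRW : frobNorm (R1 * W) ≤ frobNorm R1 := by
    rw [frobNorm_eq, frobNorm_eq]
    apply Real.sqrt_le_sqrt
    calc fro2 (R1 * W) ≤ fro2 R1 * ‖W‖ ^ 2 := fro2_mul_le_right _ _
      _ ≤ fro2 R1 * 1 := by
          apply mul_le_mul_of_nonneg_left _ (fro2_nonneg R1)
          nlinarith [norm_nonneg W]
      _ = fro2 R1 := mul_one _
  have hSY : frobNorm (S * Y) ≤ ‖S‖ * frobNorm Y := by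
    rw [frobNorm_eq, frobNorm_eq]
    calc Real.sqrt (fro2 (S * Y)) ≤ Real.sqrt (‖S‖ ^ 2 * fro2 Y) :=
          Real.sqrt_le_sqrt (fro2_mul_le_left _ _)
      _ = ‖S‖ * Real.sqrt (fro2 Y) := by
          rw [Real.sqrt_mul (by positivity), Real.sqrt_sq (norm_nonneg S)]
  have h2 : frobNorm N ≤ frobNorm R1 + ‖S‖ * frobNorm Y :=
    (frobNorm_add_le _ _).trans (add_le_add hRW hSY)
  -- final arithmetic
  have hd : 0 < Gap - ‖S‖ ^ 2 / gap := sub_pos.2 hGap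
  have hy0 : 0 ≤ frobNorm Y := frobNorm_nonneg Y
  have hz0 : 0 ≤ frobNorm Z := frobNorm_nonneg Z
  have hr0 : 0 ≤ frobNorm R1 := frobNorm_nonneg R1
  have hs0 : 0 ≤ ‖S‖ := norm_nonneg S
  have hchain : Gap * frobNorm Z ≤ frobNorm R1 + ‖S‖ * frobNorm Y := hGz.trans h2
  have hsy : ‖S‖ * frobNorm Y ≤ ‖S‖ ^ 2 * frobNorm Z / gap := by
    rw [le_div_iff₀ hgap]
    have h4 := mul_le_mul_of_nonneg_left h3 hs0
    have e1 : ‖S‖ * frobNorm Y * gap = ‖S‖ * (gap * frobNorm Y) := by ring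
    have e2 : ‖S‖ ^ 2 * frobNorm Z = ‖S‖ * (‖S‖ * frobNorm Z) := by ring
    linarith
  have hzle : frobNorm Z ≤ frobNorm R1 / (Gap - ‖S‖ ^ 2 / gap) := by
    rw [le_div_iff₀ hd]
    have e : frobNorm Z * (Gap - ‖S‖ ^ 2 / gap)
        = Gap * frobNorm Z - ‖S‖ ^ 2 * frobNorm Z / gap := by ring
    rw [e]
    linarith
  -- split the Frobenius norm of [Y; Z]
  have hsum : fro2 (X.submatrix (Sum.elim (fun i => Sum.inl (Sum.inr i)) Sum.inr) id)
      = fro2 Y + fro2 Z := by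
    rw [fro2, Fintype.sum_sum_type]
    rfl
  have hyb : frobNorm Y ^ 2 ≤ frobNorm Z ^ 2 * ‖S‖ ^ 2 / gap ^ 2 := by
    rw [le_div_iff₀ (by positivity : (0:ℝ) < gap ^ 2)]
    have h4 := pow_le_pow_left₀ (mul_nonneg hgap.le hy0) h3 2
    have e1 : frobNorm Y ^ 2 * gap ^ 2 = (gap * frobNorm Y) ^ 2 := by ring
    have e2 : frobNorm Z ^ 2 * ‖S‖ ^ 2 = (‖S‖ * frobNorm Z) ^ 2 := by ring
    linarith
  calc frobNorm (X.submatrix (Sum.elim (fun i => Sum.inl (Sum.inr i)) Sum.inr) id)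
      = Real.sqrt (frobNorm Y ^ 2 + frobNorm Z ^ 2) := by
        rw [frobNorm_eq, hsum, sq_frobNorm, sq_frobNorm]
    _ ≤ Real.sqrt (frobNorm Z ^ 2 * (1 + ‖S‖ ^ 2 / gap ^ 2)) := by
        apply Real.sqrt_le_sqrt
        have : frobNorm Z ^ 2 * (1 + ‖S‖ ^ 2 / gap ^ 2)
            = frobNorm Z ^ 2 + frobNorm Z ^ 2 * ‖S‖ ^ 2 / gap ^ 2 := by ring
        rw [this]
        linarith [hyb]
    _ = frobNorm Z * Real.sqrt (1 + ‖S‖ ^ 2 / gap ^ 2) := by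
        rw [Real.sqrt_mul (by positivity), Real.sqrt_sq hz0]
    _ ≤ (frobNorm R1 / (Gap - ‖S‖ ^ 2 / gap)) * Real.sqrt (1 + ‖S‖ ^ 2 / gap ^ 2) :=
        mul_le_mul_of_nonneg_right hzle (Real.sqrt_nonneg _)
end

section
/- Let Ã be an n×n Hermitian matrix of the 3×3 block form Ã = [[Λ̂₁, 0, R₁*],[0, Λ̂₂, R₂*],[R₁, R₂, A₃]] as described. Suppose X̃₁ ∈ ℂ^{n×k₁} has orthonormal columns and satisfies ÃX̃₁ = X̃₁Λ₁ for a real diagonal k₁×k₁ matrix Λ₁, with rows partitioned conformally as X̃₁ = (W; Y; Z). If Gap > 0, then ‖Z‖_F ≤ ‖R‖_F / Gap. -/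
open Matrix
open scoped Matrix.Norms.L2Operator

-- Auxiliary definitions and lemmas
noncomputable def F2 {α β : Type*} [Fintype α] [Fintype β] (M : Matrix α β ℂ) : ℝ :=
  ∑ i, ∑ j, ‖M i j‖ ^ 2

lemma F2_nonneg {α β : Type*} [Fintype α] [Fintype β] (M : Matrix α β ℂ) : 0 ≤ F2 M := by
  unfold F2; positivity

lemma trace_re_eq_F2 {α β : Type*} [Fintype α] [Fintype β] (M : Matrix α β ℂ) :
    ((Mᴴ * M).trace).re = F2 M := by
  have h : (Mᴴ * M).trace = ∑ j, ∑ i, (starRingEnd ℂ) (M i j) * M i j := by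
    simp [Matrix.trace, Matrix.diag, Matrix.mul_apply, Matrix.conjTranspose_apply]
  rw [h]
  simp only [Complex.re_sum]
  rw [Finset.sum_comm]
  unfold F2
  refine Finset.sum_congr rfl fun i _ => Finset.sum_congr rfl fun j _ => ?_
  rw [mul_comm, Complex.mul_conj, Complex.ofReal_re, Complex.normSq_eq_norm_sq]

lemma F2_unit {α β : Type*} [Fintype α] [Fintype β] [DecidableEq α]
    (U : Matrix α α ℂ) (hU : U * Uᴴ = 1) (M : Matrix α β ℂ) :
    F2 (Uᴴ * M) = F2 M := by
  rw [← trace_re_eq_F2, ← trace_re_eq_F2 M]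
  congr 1
  rw [conjTranspose_mul, conjTranspose_conjTranspose,
    ← Matrix.mul_assoc (Mᴴ * U) Uᴴ M, Matrix.mul_assoc Mᴴ U Uᴴ, hU, Matrix.mul_one]

lemma F2_contract {α β γ : Type*} [Fintype α] [Fintype β] [Fintype γ] [DecidableEq γ] [DecidableEq β]
    (T : Matrix α γ ℂ) (X : Matrix γ β ℂ) (hX : Xᴴ * X = 1) :
    F2 (T * X) ≤ F2 T := by
  set Q : Matrix γ γ ℂ := 1 - X * Xᴴ with hQdef
  have hQherm : Qᴴ = Q := by
    simp [hQdef, sub_eq_add_neg, conjTranspose_mul]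
  have hQidem : Q * Q = Q := by
    simp only [hQdef, Matrix.mul_sub, Matrix.sub_mul, Matrix.one_mul, Matrix.mul_one]
    rw [Matrix.mul_assoc X Xᴴ (X * Xᴴ), ← Matrix.mul_assoc Xᴴ X Xᴴ, hX, Matrix.one_mul]
    abel
  have key : F2 T - F2 (T * X) = F2 (Q * Tᴴ) := by
    rw [← trace_re_eq_F2, ← trace_re_eq_F2, ← trace_re_eq_F2, ← Complex.sub_re]
    congr 1
    have h1 : ((T * X)ᴴ * (T * X)).trace = (Tᴴ * T * (X * Xᴴ)).trace := by
      rw [conjTranspose_mul, Matrix.mul_assoc Xᴴ Tᴴ (T * X), Matrix.trace_mul_comm]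
      congr 1
      simp only [Matrix.mul_assoc]
    rw [h1, ← Matrix.trace_sub]
    have e1 : Tᴴ * T - Tᴴ * T * (X * Xᴴ) = (Tᴴ * T) * Q := by
      rw [hQdef, Matrix.mul_sub, Matrix.mul_one]
    have e2 : (Q * Tᴴ)ᴴ * (Q * Tᴴ) = T * (Q * Tᴴ) := by
      rw [conjTranspose_mul, conjTranspose_conjTranspose, hQherm,
        Matrix.mul_assoc T Q (Q * Tᴴ), ← Matrix.mul_assoc Q Q Tᴴ, hQidem]
    rw [e1, e2, Matrix.mul_assoc Tᴴ T Q, Matrix.trace_mul_comm, Matrix.mul_assoc T Q Tᴴ]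
  nlinarith [F2_nonneg (Q * Tᴴ)]

/-- Generalized Davis–Kahan `sin θ` bound (eq. (5.7) of the paper):
if `Gap > 0`, then `‖Z‖_F ≤ ‖R‖_F/Gap`. -/
theorem subspace_Z_bound_frobenius
    {k n k₁ : ℕ} (hk : 2 ≤ k) (hkn : k ≤ n) (hk₁ : 1 ≤ k₁) (hk₁k : k₁ < k)
    (lamhat1 : Fin k₁ → ℝ) (lamhat2 : Fin (k - k₁) → ℝ)
    (R : Matrix (Fin (n - k)) (Fin k₁ ⊕ Fin (k - k₁)) ℂ)
    (A3 : Matrix (Fin (n - k)) (Fin (n - k)) ℂ) (hA3 : A3.IsHermitian)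
    (X : Matrix ((Fin k₁ ⊕ Fin (k - k₁)) ⊕ Fin (n - k)) (Fin k₁) ℂ)
    (hX : Xᴴ * X = 1)
    (Lam1 : Fin k₁ → ℝ)
    (heig :
      (Matrix.fromBlocks
          (Matrix.diagonal fun i => Complex.ofReal (Sum.elim lamhat1 lamhat2 i))
          Rᴴ R A3) * X = X * Matrix.diagonal fun i => Complex.ofReal (Lam1 i))
    (Gap : ℝ)
    (hGapDef : Gap = ⨅ i, ⨅ j, |Lam1 i - hA3.eigenvalues j|)
    (hGap : 0 < Gap) :
    frobNorm (X.submatrix Sum.inr id) ≤ frobNorm R / Gap := by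
  set W := X.submatrix Sum.inl id with hW
  set Z := X.submatrix Sum.inr id with hZ
  set L : Matrix (Fin k₁) (Fin k₁) ℂ := Matrix.diagonal fun i => Complex.ofReal (Lam1 i) with hL
  set U : Matrix (Fin (n-k)) (Fin (n-k)) ℂ := ((hA3.eigenvectorUnitary : unitaryGroup (Fin (n-k)) ℂ) : Matrix (Fin (n-k)) (Fin (n-k)) ℂ) with hU
  have hU1 : U * Uᴴ = 1 := by
    rw [← Matrix.star_eq_conjTranspose]
    exact (Matrix.mem_unitaryGroup_iff).mp hA3.eigenvectorUnitary.2
  have hU2 : Uᴴ * U = 1 := by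
    rw [← Matrix.star_eq_conjTranspose]
    exact (Matrix.mem_unitaryGroup_iff').mp hA3.eigenvectorUnitary.2
  set D : Matrix (Fin (n-k)) (Fin (n-k)) ℂ :=
    Matrix.diagonal (RCLike.ofReal ∘ hA3.eigenvalues) with hD
  have hspec : A3 = U * D * Uᴴ := by
    rw [hU, hD, ← Matrix.star_eq_conjTranspose]
    exact hA3.spectral_theorem
  -- bottom block of eigen equation
  have hbot : R * W + A3 * Z = Z * L := by
    ext j i
    have h := congrFun (congrFun heig (Sum.inr j)) i
    simpa [hW, hZ, Matrix.mul_apply, Fintype.sum_sum_type, Matrix.add_apply,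
      Matrix.submatrix_apply, Matrix.mul_diagonal] using h
  set S := Uᴴ * R with hS
  set Y := Uᴴ * Z with hY
  have hA3Z : Uᴴ * (A3 * Z) = D * Y := by
    rw [hspec, hY]
    simp only [Matrix.mul_assoc, ← Matrix.mul_assoc Uᴴ U, hU2, Matrix.one_mul]
  have heq2 : S * W + D * Y = Y * L := by
    have h : Uᴴ * (R * W + A3 * Z) = Uᴴ * (Z * L) := by rw [hbot]
    rw [Matrix.mul_add, hA3Z, ← Matrix.mul_assoc Uᴴ R W, ← Matrix.mul_assoc Uᴴ Z L] at h
    exact h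
  have hent : ∀ j i, (S * W) j i
      = Y j i * ((Lam1 i : ℂ) - (hA3.eigenvalues j : ℂ)) := by
    intro j i
    have h := congrFun (congrFun heq2 j) i
    simp only [Matrix.add_apply, hD, hL, Matrix.diagonal_mul, Matrix.mul_diagonal,
      Function.comp_apply] at h
    have : (RCLike.ofReal (hA3.eigenvalues j) : ℂ) = (hA3.eigenvalues j : ℂ) := rfl
    rw [this] at h
    linear_combination h
  have hGapLe : ∀ (i : Fin k₁) (j : Fin (n-k)), Gap ≤ |Lam1 i - hA3.eigenvalues j| := by
    intro i j
    rw [hGapDef]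
    have hbdd : ∀ i', BddBelow (Set.range fun j' => |Lam1 i' - hA3.eigenvalues j'|) :=
      fun i' => ⟨0, by rintro x ⟨j', rfl⟩; exact abs_nonneg _⟩
    calc (⨅ i', ⨅ j', |Lam1 i' - hA3.eigenvalues j'|)
        ≤ ⨅ j', |Lam1 i - hA3.eigenvalues j'| := by
          refine ciInf_le ⟨0, ?_⟩ i
          rintro x ⟨i', rfl⟩
          exact Real.iInf_nonneg fun j' => abs_nonneg _
      _ ≤ |Lam1 i - hA3.eigenvalues j| := ciInf_le (hbdd i) j
  -- entrywise norm bound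
  have hnorm : ∀ j i, ‖Y j i‖ * Gap ≤ ‖(S * W) j i‖ := by
    intro j i
    rw [hent j i, norm_mul]
    have : ‖((Lam1 i : ℂ) - (hA3.eigenvalues j : ℂ))‖ = |Lam1 i - hA3.eigenvalues j| := by
      rw [← Complex.ofReal_sub, Complex.norm_real, Real.norm_eq_abs]
    rw [this]
    exact mul_le_mul_of_nonneg_left (hGapLe i j) (norm_nonneg _)
  have hYSW : F2 Y * Gap ^ 2 ≤ F2 (S * W) := by
    unfold F2
    rw [Finset.sum_mul]
    refine Finset.sum_le_sum fun j _ => ?_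
    rw [Finset.sum_mul]
    refine Finset.sum_le_sum fun i _ => ?_
    have h := hnorm j i
    calc ‖Y j i‖ ^ 2 * Gap ^ 2 = (‖Y j i‖ * Gap) ^ 2 := by ring
      _ ≤ ‖(S * W) j i‖ ^ 2 := pow_le_pow_left₀ (by positivity) h 2
  set T : Matrix (Fin (n-k)) ((Fin k₁ ⊕ Fin (k - k₁)) ⊕ Fin (n-k)) ℂ :=
    Matrix.of (fun j p => Sum.elim (fun a => S j a) (fun _ => (0:ℂ)) p) with hT
  have hTX : T * X = S * W := by
    ext j i
    simp [hT, hW, Matrix.mul_apply, Fintype.sum_sum_type, Matrix.submatrix_apply]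
  have hF2T : F2 T = F2 S := by
    unfold F2
    refine Finset.sum_congr rfl fun j _ => ?_
    simp [hT, Fintype.sum_sum_type]
  have hSWR : F2 (S * W) ≤ F2 R := by
    calc F2 (S * W) = F2 (T * X) := by rw [hTX]
      _ ≤ F2 T := F2_contract T X hX
      _ = F2 S := hF2T
      _ = F2 R := F2_unit U hU1 R
  have hZY : F2 Z = F2 Y := (F2_unit U hU1 Z).symm
  have hfinal : F2 Z ≤ F2 R / Gap ^ 2 := by
    rw [hZY, le_div_iff₀ (by positivity)]
    exact le_trans hYSW hSWR
  show Real.sqrt (F2 Z) ≤ Real.sqrt (F2 R) / Gap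
  have h1 := Real.sqrt_le_sqrt hfinal
  rwa [Real.sqrt_div (F2_nonneg R), Real.sqrt_sq hGap.le] at h1
end

section
/- Let Ã ∈ ℂ^{m×n} be of the 3×3 block form Ã = [[Σ̂₁, 0, R₁],[0, Σ̂₂, R₂],[S₁, S₂, A₃]] as described, and let (Σ₁, Ũ₁, Ṽ₁) be exact singular triplets: ÃṼ₁ = Ũ₁Σ₁ and Ã*Ũ₁ = Ṽ₁Σ₁, with Ũ₁, Ṽ₁ having orthonormal columns and Σ₁ real diagonal with positive diagonal entries. Partition Ũ₁ = (Ũ₁₁; Ũ₂₁; Ũ₃₁) and Ṽ₁ = (Ṽ₁₁; Ṽ₂₁; Ṽ₃₁) conformally with the block rows and columns of Ã. Assume Gap := σ_min(Σ₁) − ‖A₃‖ > 0 and gap := σ_min(Σ₁) − ‖Σ̂₂‖ > 0. Then max(‖[Ũ₂₁; Ũ₃₁]‖, ‖[Ṽ₂₁; Ṽ₃₁]‖) ≤ (max(‖R‖, ‖S‖)/Gap) · (1 + max(‖R₂‖, ‖S₂‖)/gap). -/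
open Matrix
open scoped Matrix.Norms.L2Operator

set_option linter.unusedSectionVars false
set_option maxHeartbeats 2000000

noncomputable section

namespace SVDAux

variable {ι ρ m₁ m₂ n : Type*} [Fintype ι] [DecidableEq ι] [Fintype ρ] [Fintype m₁] [Fintype m₂]
  [Fintype n] [DecidableEq n] [DecidableEq m₁] [DecidableEq m₂]

lemma norm_diagonal_le (d : ι → ℂ) {c : ℝ}
    (hc : 0 ≤ c) (h : ∀ i, ‖d i‖ ≤ c) : ‖Matrix.diagonal d‖ ≤ c := by
  rw [Matrix.l2_opNorm_def]
  refine ContinuousLinearMap.opNorm_le_bound _ hc fun x => ?_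
  show ‖Matrix.toEuclideanLin (Matrix.diagonal d) x‖ ≤ _
  rw [Matrix.toEuclideanLin_apply]
  rw [EuclideanSpace.norm_eq, EuclideanSpace.norm_eq]
  have key : ∀ i, ‖((WithLp.equiv 2 (ι → ℂ)).symm
        (Matrix.diagonal d *ᵥ (WithLp.equiv 2 (ι → ℂ)) x)) i‖ ^ 2 ≤ c ^ 2 * ‖x i‖ ^ 2 := by
    intro i
    have : ((WithLp.equiv 2 (ι → ℂ)).symm
        (Matrix.diagonal d *ᵥ (WithLp.equiv 2 (ι → ℂ)) x)) i = d i * x i := by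
      simp [Matrix.mulVec_diagonal]
    rw [this, norm_mul, mul_pow]
    have := h i
    have h2 : ‖d i‖ ^ 2 ≤ c ^ 2 := by nlinarith [norm_nonneg (d i)]
    nlinarith [sq_nonneg ‖x i‖, norm_nonneg (x i)]
  calc √(∑ i, ‖((WithLp.equiv 2 (ι → ℂ)).symm
        (Matrix.diagonal d *ᵥ (WithLp.equiv 2 (ι → ℂ)) x)) i‖ ^ 2)
      ≤ √(∑ i, c ^ 2 * ‖x i‖ ^ 2) := by
        apply Real.sqrt_le_sqrt; exact Finset.sum_le_sum fun i _ => key i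
    _ = c * √(∑ i, ‖x i‖ ^ 2) := by
        rw [← Finset.mul_sum, Real.sqrt_mul (by positivity), Real.sqrt_sq hc]

lemma norm_fromRows_zero (A : Matrix m₁ n ℂ) :
    ‖Matrix.fromRows A (0 : Matrix m₂ n ℂ)‖ = ‖A‖ := by
  have h1 := Matrix.l2_opNorm_conjTranspose_mul_self (Matrix.fromRows A (0 : Matrix m₂ n ℂ))
  rw [Matrix.conjTranspose_fromRows_eq_fromCols_conjTranspose,
    Matrix.fromCols_mul_fromRows] at h1
  simp only [Matrix.conjTranspose_zero, Matrix.mul_zero, add_zero] at h1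
  have h2 := Matrix.l2_opNorm_conjTranspose_mul_self A
  have := h1.symm.trans h2
  nlinarith [norm_nonneg (Matrix.fromRows A (0 : Matrix m₂ n ℂ)), norm_nonneg A]

lemma norm_zero_fromRows (A : Matrix m₂ n ℂ) :
    ‖Matrix.fromRows (0 : Matrix m₁ n ℂ) A‖ = ‖A‖ := by
  have h1 := Matrix.l2_opNorm_conjTranspose_mul_self (Matrix.fromRows (0 : Matrix m₁ n ℂ) A)
  rw [Matrix.conjTranspose_fromRows_eq_fromCols_conjTranspose,
    Matrix.fromCols_mul_fromRows] at h1
  simp only [Matrix.conjTranspose_zero, Matrix.mul_zero, zero_add] at h1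
  have h2 := Matrix.l2_opNorm_conjTranspose_mul_self A
  have := h1.symm.trans h2
  nlinarith [norm_nonneg (Matrix.fromRows (0 : Matrix m₁ n ℂ) A), norm_nonneg A]

lemma norm_fromRows_le (A : Matrix m₁ n ℂ) (B : Matrix m₂ n ℂ) :
    ‖Matrix.fromRows A B‖ ≤ ‖A‖ + ‖B‖ := by
  have : Matrix.fromRows A B
      = Matrix.fromRows A (0 : Matrix m₂ n ℂ) + Matrix.fromRows (0 : Matrix m₁ n ℂ) B := by
    ext i j; cases i <;> simp [Matrix.fromRows_apply_inl, Matrix.fromRows_apply_inr]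
  rw [this]
  calc ‖_ + _‖ ≤ _ := norm_add_le _ _
    _ = ‖A‖ + ‖B‖ := by rw [norm_fromRows_zero, norm_zero_fromRows]

lemma norm_left_le_fromRows (A : Matrix m₁ n ℂ) (B : Matrix m₂ n ℂ) :
    ‖A‖ ≤ ‖Matrix.fromRows A B‖ := by
  cases isEmpty_or_nonempty m₁ with
  | inl h =>
      have : A = 0 := Subsingleton.elim _ _
      rw [this, norm_zero]; exact norm_nonneg _
  | inr h =>
      have hA : A = Matrix.fromCols (1 : Matrix m₁ m₁ ℂ) (0 : Matrix m₁ m₂ ℂ) *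
          Matrix.fromRows A B := by
        rw [Matrix.fromCols_mul_fromRows, Matrix.one_mul, Matrix.zero_mul, add_zero]
      calc ‖A‖ = ‖Matrix.fromCols (1 : Matrix m₁ m₁ ℂ) (0 : Matrix m₁ m₂ ℂ) *
            Matrix.fromRows A B‖ := by rw [← hA]
        _ ≤ ‖Matrix.fromCols (1 : Matrix m₁ m₁ ℂ) (0 : Matrix m₁ m₂ ℂ)‖ *
            ‖Matrix.fromRows A B‖ := Matrix.l2_opNorm_mul _ _
        _ ≤ 1 * ‖Matrix.fromRows A B‖ := by
            apply mul_le_mul_of_nonneg_right _ (norm_nonneg _)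
            rw [← Matrix.l2_opNorm_conjTranspose,
              Matrix.conjTranspose_fromCols_eq_fromRows_conjTranspose]
            simp only [Matrix.conjTranspose_one, Matrix.conjTranspose_zero]
            rw [norm_fromRows_zero]
            exact le_of_eq norm_one
        _ = ‖Matrix.fromRows A B‖ := one_mul _

lemma norm_right_le_fromRows (A : Matrix m₁ n ℂ) (B : Matrix m₂ n ℂ) :
    ‖B‖ ≤ ‖Matrix.fromRows A B‖ := by
  cases isEmpty_or_nonempty m₂ with
  | inl h =>
      have : B = 0 := Subsingleton.elim _ _
      rw [this, norm_zero]; exact norm_nonneg _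
  | inr h =>
      have hB : B = Matrix.fromCols (0 : Matrix m₂ m₁ ℂ) (1 : Matrix m₂ m₂ ℂ) *
          Matrix.fromRows A B := by
        rw [Matrix.fromCols_mul_fromRows, Matrix.one_mul, Matrix.zero_mul, zero_add]
      calc ‖B‖ = _ := by rw [← hB]
        _ ≤ ‖Matrix.fromCols (0 : Matrix m₂ m₁ ℂ) (1 : Matrix m₂ m₂ ℂ)‖ *
            ‖Matrix.fromRows A B‖ := Matrix.l2_opNorm_mul _ _
        _ ≤ 1 * ‖Matrix.fromRows A B‖ := by
            apply mul_le_mul_of_nonneg_right _ (norm_nonneg _)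
            rw [← Matrix.l2_opNorm_conjTranspose,
              Matrix.conjTranspose_fromCols_eq_fromRows_conjTranspose]
            simp only [Matrix.conjTranspose_one, Matrix.conjTranspose_zero]
            rw [norm_zero_fromRows]
            exact le_of_eq norm_one
        _ = ‖Matrix.fromRows A B‖ := one_mul _

lemma mul_diag_lower (σ1 : ι → ℝ) (σ : ℝ) (hσ : 0 < σ) (hle : ∀ i, σ ≤ σ1 i)
    (B : Matrix ρ ι ℂ) :
    σ * ‖B‖ ≤ ‖B * Matrix.diagonal (fun i => Complex.ofReal (σ1 i))‖ := by
  set D := Matrix.diagonal (fun i => Complex.ofReal (σ1 i)) with hD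
  set D' := Matrix.diagonal (fun i => (Complex.ofReal (σ1 i))⁻¹) with hD'def
  have hpos : ∀ i, 0 < σ1 i := fun i => hσ.trans_le (hle i)
  have hinv : D * D' = 1 := by
    rw [hD, hD'def, Matrix.diagonal_mul_diagonal]
    have : (fun i => Complex.ofReal (σ1 i) * (Complex.ofReal (σ1 i))⁻¹) = fun _ => (1 : ℂ) := by
      funext i
      exact mul_inv_cancel₀ (by exact_mod_cast (hpos i).ne')
    rw [this, Matrix.diagonal_one]
  have hB : B = (B * D) * D' := by rw [Matrix.mul_assoc, hinv, Matrix.mul_one]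
  have hD' : ‖D'‖ ≤ σ⁻¹ := by
    apply norm_diagonal_le _ (by positivity)
    intro i
    rw [norm_inv]
    have h1 : ‖Complex.ofReal (σ1 i)‖ = σ1 i := by
      rw [Complex.norm_real]; exact Real.norm_of_nonneg (hpos i).le
    rw [h1]
    exact inv_anti₀ hσ (hle i)
  have hle2 : ‖B‖ ≤ ‖B * D‖ * σ⁻¹ := by
    calc ‖B‖ = ‖(B * D) * D'‖ := by rw [← hB]
      _ ≤ ‖B * D‖ * ‖D'‖ := Matrix.l2_opNorm_mul _ _
      _ ≤ ‖B * D‖ * σ⁻¹ := mul_le_mul_of_nonneg_left hD' (norm_nonneg _)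
  calc σ * ‖B‖ ≤ σ * (‖B * D‖ * σ⁻¹) := mul_le_mul_of_nonneg_left hle2 hσ.le
    _ = ‖B * D‖ := by field_simp

lemma toRows₁_mul (A : Matrix (m₁ ⊕ m₂) n ℂ) (B : Matrix n ρ ℂ) :
    (A * B).toRows₁ = A.toRows₁ * B := by
  ext i j; rfl

lemma toRows₂_mul (A : Matrix (m₁ ⊕ m₂) n ℂ) (B : Matrix n ρ ℂ) :
    (A * B).toRows₂ = A.toRows₂ * B := by
  ext i j; rfl

lemma toRows₁_add (A B : Matrix (m₁ ⊕ m₂) n ℂ) :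
    (A + B).toRows₁ = A.toRows₁ + B.toRows₁ := by
  ext i j; rfl

lemma toRows₂_add (A B : Matrix (m₁ ⊕ m₂) n ℂ) :
    (A + B).toRows₂ = A.toRows₂ + B.toRows₂ := by
  ext i j; rfl

lemma conjTranspose_toRows₂ (A : Matrix ρ (m₁ ⊕ m₂) ℂ) :
    (Aᴴ).toRows₂ = (A.toCols₂)ᴴ := by
  ext i j; rfl

lemma arith_bound (σm Gap gap εR εS δR δS β γ a b c d nU nV : ℝ)
    (hGapDef : Gap = σm - β) (hgapDef : gap = σm - γ)
    (hGap : 0 < Gap) (hgap : 0 < gap)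
    (hβ : 0 ≤ β) (hγ : 0 ≤ γ)
    (hεR : 0 ≤ εR) (hεS : 0 ≤ εS) (hδR : 0 ≤ δR) (hδS : 0 ≤ δS)
    (han : 0 ≤ a) (hbn : 0 ≤ b) (hcn : 0 ≤ c) (hdn : 0 ≤ d)
    (hb : σm * b ≤ εS + β * d) (hd : σm * d ≤ εR + β * b)
    (ha : σm * a ≤ γ * c + δR * d) (hc : σm * c ≤ γ * a + δS * b)
    (hnU : nU ≤ a + b) (hnV : nV ≤ c + d) :
    max nU nV ≤ (max εR εS / Gap) * (1 + max δR δS / gap) := by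
  set ε := max εR εS with hε
  set δ := max δR δS with hδ
  set t := max b d with ht
  set s := max a c with hs
  have hεn : 0 ≤ ε := le_trans hεR (le_max_left _ _)
  have hδn : 0 ≤ δ := le_trans hδR (le_max_left _ _)
  have htn : 0 ≤ t := le_trans hbn (le_max_left _ _)
  have hsn : 0 ≤ s := le_trans han (le_max_left _ _)
  have hbt : b ≤ t := le_max_left _ _
  have hdt : d ≤ t := le_max_right _ _
  have has : a ≤ s := le_max_left _ _
  have hcs : c ≤ s := le_max_right _ _
  have hGt : Gap * t ≤ ε := by
    rcases max_choice b d with h | h <;> rw [ht, h, hGapDef]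
    · nlinarith [mul_le_mul_of_nonneg_left (max_eq_left_iff.mp h) hβ,
        le_max_right εR εS]
    · nlinarith [mul_le_mul_of_nonneg_left (max_eq_right_iff.mp h) hβ,
        le_max_left εR εS]
  have hgs : gap * s ≤ δ * t := by
    rcases max_choice a c with h | h <;> rw [hs, h, hgapDef]
    · nlinarith [mul_le_mul_of_nonneg_left (max_eq_left_iff.mp h) hγ,
        mul_le_mul (le_max_left δR δS) hdt hdn hδn]
    · nlinarith [mul_le_mul_of_nonneg_left (max_eq_right_iff.mp h) hγ,
        mul_le_mul (le_max_right δR δS) hbt hbn hδn]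
  have hts : t ≤ ε / Gap := (le_div_iff₀ hGap).mpr (by linarith)
  have hss : s ≤ δ * (ε / Gap) / gap := by
    rw [le_div_iff₀ hgap]
    calc s * gap = gap * s := mul_comm _ _
      _ ≤ δ * t := hgs
      _ ≤ δ * (ε / Gap) := mul_le_mul_of_nonneg_left hts hδn
  have hfinal : s + t ≤ ε / Gap * (1 + δ / gap) := by
    have hexp : ε / Gap * (1 + δ / gap) = δ * (ε / Gap) / gap + ε / Gap := by ring
    linarith
  exact max_le (by linarith) (by linarith)

end SVDAux

end

/-- Theorem 6.1, bound (6.2) of the paper: for the projected SVD setting,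
`max(‖[Ũ₂₁;Ũ₃₁]‖, ‖[Ṽ₂₁;Ṽ₃₁]‖) ≤ (max(‖R‖,‖S‖)/Gap)·(1 + max(‖R₂‖,‖S₂‖)/gap)`. -/
theorem svd_subspace_bound
    {m n k₁ km kn : ℕ} (hmn : n ≤ m) (hk₁ : 1 ≤ k₁)
    (hk₁km : k₁ ≤ km) (hkmm : km ≤ m) (hk₁kn : k₁ ≤ kn) (hknn : kn ≤ n)
    (σ1hat : Fin k₁ → ℝ) (hσ1hat : ∀ i, 0 ≤ σ1hat i)
    (Sig2hat : Matrix (Fin (km - k₁)) (Fin (kn - k₁)) ℂ)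
    (hSig2off : ∀ (i : Fin (km - k₁)) (j : Fin (kn - k₁)), (i : ℕ) ≠ (j : ℕ) → Sig2hat i j = 0)
    (hSig2diag : ∀ (i : Fin (km - k₁)) (j : Fin (kn - k₁)), (i : ℕ) = (j : ℕ) →
      ∃ r : ℝ, 0 ≤ r ∧ Sig2hat i j = (r : ℂ))
    (R : Matrix (Fin k₁ ⊕ Fin (km - k₁)) (Fin (n - kn)) ℂ)
    (S : Matrix (Fin (m - km)) (Fin k₁ ⊕ Fin (kn - k₁)) ℂ)
    (A3 : Matrix (Fin (m - km)) (Fin (n - kn)) ℂ)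
    (U : Matrix ((Fin k₁ ⊕ Fin (km - k₁)) ⊕ Fin (m - km)) (Fin k₁) ℂ)
    (V : Matrix ((Fin k₁ ⊕ Fin (kn - k₁)) ⊕ Fin (n - kn)) (Fin k₁) ℂ)
    (hU : Uᴴ * U = 1) (hV : Vᴴ * V = 1)
    (σ1 : Fin k₁ → ℝ) (hσ1 : ∀ i, 0 < σ1 i)
    (hAV :
      (Matrix.fromBlocks
          (Matrix.fromBlocks (Matrix.diagonal fun i => Complex.ofReal (σ1hat i)) 0 0 Sig2hat)
          R S A3) * V = U * Matrix.diagonal fun i => Complex.ofReal (σ1 i))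
    (hAU :
      (Matrix.fromBlocks
          (Matrix.fromBlocks (Matrix.diagonal fun i => Complex.ofReal (σ1hat i)) 0 0 Sig2hat)
          R S A3)ᴴ * U = V * Matrix.diagonal fun i => Complex.ofReal (σ1 i))
    (Gap gap : ℝ)
    (hGapDef : Gap = (⨅ i, σ1 i) - ‖A3‖)
    (hgapDef : gap = (⨅ i, σ1 i) - ‖Sig2hat‖)
    (hGap : 0 < Gap) (hgap : 0 < gap) :
    max ‖U.submatrix (Sum.elim (fun i => Sum.inl (Sum.inr i)) Sum.inr) id‖
        ‖V.submatrix (Sum.elim (fun i => Sum.inl (Sum.inr i)) Sum.inr) id‖ ≤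
      (max ‖R‖ ‖S‖ / Gap) *
        (1 + max ‖R.submatrix Sum.inr id‖ ‖S.submatrix id Sum.inr‖ / gap) := by
  classical
  haveI : Nonempty (Fin k₁) := ⟨⟨0, hk₁⟩⟩
  set D : Matrix (Fin k₁) (Fin k₁) ℂ := Matrix.diagonal fun i => Complex.ofReal (σ1 i) with hDdef
  set Sig1 : Matrix (Fin k₁) (Fin k₁) ℂ :=
    Matrix.diagonal fun i => Complex.ofReal (σ1hat i) with hSig1def
  set T := Matrix.fromBlocks Sig1 0 0 Sig2hat with hTdef
  set U12 := U.toRows₁ with hU12def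
  set U3 := U.toRows₂ with hU3def
  set V12 := V.toRows₁ with hV12def
  set V3 := V.toRows₂ with hV3def
  set U2 := U12.toRows₂ with hU2def
  set V2 := V12.toRows₂ with hV2def
  set R2 := R.toRows₂ with hR2def
  set S2 := S.toCols₂ with hS2def
  have hUdec : U = Matrix.fromRows U12 U3 := (Matrix.fromRows_toRows U).symm
  have hVdec : V = Matrix.fromRows V12 V3 := (Matrix.fromRows_toRows V).symm
  -- block equations
  have hAV' : Matrix.fromRows (T * V12 + R * V3) (S * V12 + A3 * V3)
      = Matrix.fromRows (U12 * D) (U3 * D) := by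
    rw [← Matrix.fromBlocks_mul_fromRows, ← Matrix.fromRows_mul, ← hUdec, ← hVdec]
    exact hAV
  have hAU' : Matrix.fromRows (Tᴴ * U12 + Sᴴ * U3) (Rᴴ * U12 + A3ᴴ * U3)
      = Matrix.fromRows (V12 * D) (V3 * D) := by
    rw [← Matrix.fromBlocks_mul_fromRows, ← Matrix.fromRows_mul, ← hUdec, ← hVdec,
      ← Matrix.fromBlocks_conjTranspose]
    exact hAU
  have E1 : T * V12 + R * V3 = U12 * D := by
    have := congrArg Matrix.toRows₁ hAV'
    rwa [Matrix.toRows₁_fromRows, Matrix.toRows₁_fromRows] at this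
  have E2 : S * V12 + A3 * V3 = U3 * D := by
    have := congrArg Matrix.toRows₂ hAV'
    rwa [Matrix.toRows₂_fromRows, Matrix.toRows₂_fromRows] at this
  have E3 : Tᴴ * U12 + Sᴴ * U3 = V12 * D := by
    have := congrArg Matrix.toRows₁ hAU'
    rwa [Matrix.toRows₁_fromRows, Matrix.toRows₁_fromRows] at this
  have E4 : Rᴴ * U12 + A3ᴴ * U3 = V3 * D := by
    have := congrArg Matrix.toRows₂ hAU'
    rwa [Matrix.toRows₂_fromRows, Matrix.toRows₂_fromRows] at this
  -- second-level block equations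
  have hV12dec : V12 = Matrix.fromRows V12.toRows₁ V2 := (Matrix.fromRows_toRows V12).symm
  have hU12dec : U12 = Matrix.fromRows U12.toRows₁ U2 := (Matrix.fromRows_toRows U12).symm
  have hTV : (T * V12).toRows₂ = Sig2hat * V2 := by
    rw [hV12dec, hTdef, Matrix.fromBlocks_mul_fromRows, Matrix.toRows₂_fromRows,
      Matrix.zero_mul, zero_add]
  have hTU : (Tᴴ * U12).toRows₂ = Sig2hatᴴ * U2 := by
    rw [hU12dec, hTdef, Matrix.fromBlocks_conjTranspose, Matrix.fromBlocks_mul_fromRows,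
      Matrix.toRows₂_fromRows, Matrix.conjTranspose_zero, Matrix.zero_mul, zero_add]
  have E1b : Sig2hat * V2 + R2 * V3 = U2 * D := by
    have h := congrArg Matrix.toRows₂ E1
    rwa [SVDAux.toRows₂_add, hTV, SVDAux.toRows₂_mul, SVDAux.toRows₂_mul] at h
  have E3b : Sig2hatᴴ * U2 + S2ᴴ * U3 = V2 * D := by
    have h := congrArg Matrix.toRows₂ E3
    rwa [SVDAux.toRows₂_add, hTU, SVDAux.toRows₂_mul, SVDAux.toRows₂_mul,
      SVDAux.conjTranspose_toRows₂] at h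
  -- norms of orthonormal factors
  have hone : ‖(1 : Matrix (Fin k₁) (Fin k₁) ℂ)‖ = 1 := norm_one
  have hnormU : ‖U‖ = 1 := by
    have h := Matrix.l2_opNorm_conjTranspose_mul_self U
    rw [hU, hone] at h
    rcases mul_self_eq_one_iff.mp h.symm with h3 | h3
    · exact h3
    · exfalso; have := norm_nonneg U; linarith
  have hnormV : ‖V‖ = 1 := by
    have h := Matrix.l2_opNorm_conjTranspose_mul_self V
    rw [hV, hone] at h
    rcases mul_self_eq_one_iff.mp h.symm with h3 | h3
    · exact h3
    · exfalso; have := norm_nonneg V; linarith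
  have hU12le : ‖U12‖ ≤ 1 := by
    calc ‖U12‖ ≤ ‖Matrix.fromRows U12 U3‖ := SVDAux.norm_left_le_fromRows _ _
      _ = ‖U‖ := by rw [← hUdec]
      _ = 1 := hnormU
  have hV12le : ‖V12‖ ≤ 1 := by
    calc ‖V12‖ ≤ ‖Matrix.fromRows V12 V3‖ := SVDAux.norm_left_le_fromRows _ _
      _ = ‖V‖ := by rw [← hVdec]
      _ = 1 := hnormV
  -- singular value infimum
  set σm := ⨅ i, σ1 i with hσmdef
  have hσmle : ∀ i, σm ≤ σ1 i := fun i => ciInf_le (Finite.bddBelow_range σ1) i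
  have hσmpos : 0 < σm := by
    have := norm_nonneg A3; linarith [hGap, hGapDef.symm.le, hGapDef.le]
  -- the four norm inequalities
  have hb : σm * ‖U3‖ ≤ ‖S‖ + ‖A3‖ * ‖V3‖ := by
    calc σm * ‖U3‖ ≤ ‖U3 * D‖ := SVDAux.mul_diag_lower σ1 σm hσmpos hσmle U3
      _ = ‖S * V12 + A3 * V3‖ := by rw [← E2]
      _ ≤ ‖S * V12‖ + ‖A3 * V3‖ := norm_add_le _ _
      _ ≤ ‖S‖ * ‖V12‖ + ‖A3‖ * ‖V3‖ :=
          add_le_add (Matrix.l2_opNorm_mul _ _) (Matrix.l2_opNorm_mul _ _)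
      _ ≤ ‖S‖ * 1 + ‖A3‖ * ‖V3‖ := by
          have := mul_le_mul_of_nonneg_left hV12le (norm_nonneg S); linarith
      _ = ‖S‖ + ‖A3‖ * ‖V3‖ := by ring
  have hd : σm * ‖V3‖ ≤ ‖R‖ + ‖A3‖ * ‖U3‖ := by
    calc σm * ‖V3‖ ≤ ‖V3 * D‖ := SVDAux.mul_diag_lower σ1 σm hσmpos hσmle V3
      _ = ‖Rᴴ * U12 + A3ᴴ * U3‖ := by rw [← E4]
      _ ≤ ‖Rᴴ * U12‖ + ‖A3ᴴ * U3‖ := norm_add_le _ _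
      _ ≤ ‖Rᴴ‖ * ‖U12‖ + ‖A3ᴴ‖ * ‖U3‖ :=
          add_le_add (Matrix.l2_opNorm_mul _ _) (Matrix.l2_opNorm_mul _ _)
      _ = ‖R‖ * ‖U12‖ + ‖A3‖ * ‖U3‖ := by
          rw [Matrix.l2_opNorm_conjTranspose, Matrix.l2_opNorm_conjTranspose]
      _ ≤ ‖R‖ * 1 + ‖A3‖ * ‖U3‖ := by
          have := mul_le_mul_of_nonneg_left hU12le (norm_nonneg R); linarith
      _ = ‖R‖ + ‖A3‖ * ‖U3‖ := by ring
  have ha : σm * ‖U2‖ ≤ ‖Sig2hat‖ * ‖V2‖ + ‖R2‖ * ‖V3‖ := by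
    calc σm * ‖U2‖ ≤ ‖U2 * D‖ := SVDAux.mul_diag_lower σ1 σm hσmpos hσmle U2
      _ = ‖Sig2hat * V2 + R2 * V3‖ := by rw [← E1b]
      _ ≤ ‖Sig2hat * V2‖ + ‖R2 * V3‖ := norm_add_le _ _
      _ ≤ ‖Sig2hat‖ * ‖V2‖ + ‖R2‖ * ‖V3‖ :=
          add_le_add (Matrix.l2_opNorm_mul _ _) (Matrix.l2_opNorm_mul _ _)
  have hcc : σm * ‖V2‖ ≤ ‖Sig2hat‖ * ‖U2‖ + ‖S2‖ * ‖U3‖ := by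
    calc σm * ‖V2‖ ≤ ‖V2 * D‖ := SVDAux.mul_diag_lower σ1 σm hσmpos hσmle V2
      _ = ‖Sig2hatᴴ * U2 + S2ᴴ * U3‖ := by rw [← E3b]
      _ ≤ ‖Sig2hatᴴ * U2‖ + ‖S2ᴴ * U3‖ := norm_add_le _ _
      _ ≤ ‖Sig2hatᴴ‖ * ‖U2‖ + ‖S2ᴴ‖ * ‖U3‖ :=
          add_le_add (Matrix.l2_opNorm_mul _ _) (Matrix.l2_opNorm_mul _ _)
      _ = ‖Sig2hat‖ * ‖U2‖ + ‖S2‖ * ‖U3‖ := by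
          rw [Matrix.l2_opNorm_conjTranspose, Matrix.l2_opNorm_conjTranspose]
  -- identify the goal matrices
  have hUsub : U.submatrix (Sum.elim (fun i => Sum.inl (Sum.inr i)) Sum.inr) id
      = Matrix.fromRows U2 U3 := by
    ext i j; cases i <;> rfl
  have hVsub : V.submatrix (Sum.elim (fun i => Sum.inl (Sum.inr i)) Sum.inr) id
      = Matrix.fromRows V2 V3 := by
    ext i j; cases i <;> rfl
  have hRsub : R.submatrix Sum.inr id = R2 := by ext i j; rfl
  have hSsub : S.submatrix id Sum.inr = S2 := by ext i j; rfl
  rw [hUsub, hVsub, hRsub, hSsub]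
  have hnU : ‖Matrix.fromRows U2 U3‖ ≤ ‖U2‖ + ‖U3‖ := SVDAux.norm_fromRows_le _ _
  have hnV : ‖Matrix.fromRows V2 V3‖ ≤ ‖V2‖ + ‖V3‖ := SVDAux.norm_fromRows_le _ _
  exact SVDAux.arith_bound σm Gap gap ‖R‖ ‖S‖ ‖R2‖ ‖S2‖ ‖A3‖ ‖Sig2hat‖
    ‖U2‖ ‖U3‖ ‖V2‖ ‖V3‖ ‖Matrix.fromRows U2 U3‖ ‖Matrix.fromRows V2 V3‖
    hGapDef hgapDef hGap hgap (norm_nonneg _) (norm_nonneg _)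
    (norm_nonneg _) (norm_nonneg _) (norm_nonneg _) (norm_nonneg _)
    (norm_nonneg _) (norm_nonneg _) (norm_nonneg _) (norm_nonneg _)
    hb hd ha hcc hnU hnV
end

section
/- Let Ã ∈ ℂ^{m×n} be of the 3×3 block form Ã = [[Σ̂₁, 0, R₁],[0, Σ̂₂, R₂],[S₁, S₂, A₃]] as described, and let (Σ₁, Ũ₁, Ṽ₁) be exact singular triplets: ÃṼ₁ = Ũ₁Σ₁ and Ã*Ũ₁ = Ṽ₁Σ₁, with Ũ₁, Ṽ₁ having orthonormal columns and Σ₁ real diagonal with positive diagonal entries, partitioned conformally as Ũ₁ = (Ũ₁₁; Ũ₂₁; Ũ₃₁), Ṽ₁ = (Ṽ₁₁; Ṽ₂₁; Ṽ₃₁). If gap := σ_min(Σ₁) − ‖Σ̂₂‖ > 0, then max(‖Ũ₂₁‖, ‖Ṽ₂₁‖) ≤ (max(‖R₂‖, ‖S₂‖)/gap) · max(‖Ũ₃₁‖, ‖Ṽ₃₁‖). -/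
open Matrix
open scoped Matrix.Norms.L2Operator

lemma aux_diag_le {k : ℕ} (w : Fin k → ℂ) (c : ℝ) (hc : 0 ≤ c)
    (h : ∀ i, ‖w i‖ ≤ c) : ‖Matrix.diagonal w‖ ≤ c := by
  rw [Matrix.l2_opNorm_def]
  refine ContinuousLinearMap.opNorm_le_bound _ hc fun x => ?_
  simp only [LinearEquiv.trans_apply, LinearMap.coe_toContinuousLinearMap']
  rw [Matrix.toEuclideanLin_apply, EuclideanSpace.norm_eq, EuclideanSpace.norm_eq]
  have h1 : ∀ i, ‖(WithLp.equiv 2 (Fin k → ℂ)).symm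
      (Matrix.diagonal w *ᵥ (WithLp.equiv 2 (Fin k → ℂ)) x) i‖ ^ 2 ≤ c ^ 2 * ‖x i‖ ^ 2 := by
    intro i
    simp only [WithLp.equiv_symm_apply, WithLp.ofLp_toLp, Matrix.mulVec_diagonal, norm_mul]
    calc (‖w i‖ * ‖(WithLp.equiv 2 (Fin k → ℂ)) x i‖) ^ 2
        = ‖w i‖ ^ 2 * ‖x i‖ ^ 2 := by ring_nf; rfl
      _ ≤ c ^ 2 * ‖x i‖ ^ 2 := by
          have h2 : ‖w i‖ ^ 2 ≤ c ^ 2 := by nlinarith [norm_nonneg (w i), h i]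
          nlinarith [sq_nonneg (‖x i‖)]
  calc Real.sqrt (∑ i, ‖(WithLp.equiv 2 (Fin k → ℂ)).symm
      (Matrix.diagonal w *ᵥ (WithLp.equiv 2 (Fin k → ℂ)) x) i‖ ^ 2)
      ≤ Real.sqrt (∑ i, c ^ 2 * ‖x i‖ ^ 2) :=
        Real.sqrt_le_sqrt (Finset.sum_le_sum fun i _ => h1 i)
    _ = c * Real.sqrt (∑ i, ‖x i‖ ^ 2) := by
        rw [← Finset.mul_sum, Real.sqrt_mul (by positivity), Real.sqrt_sq hc]

lemma aux_lower {p : Type*} [Fintype p] [DecidableEq p] {k : ℕ} (X : Matrix p (Fin k) ℂ)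
    (σ : Fin k → ℝ) (s : ℝ) (hs : 0 < s) (hσ : ∀ i, s ≤ σ i) :
    s * ‖X‖ ≤ ‖X * Matrix.diagonal (fun i => (σ i : ℂ))‖ := by
  have hpos : ∀ i, 0 < σ i := fun i => lt_of_lt_of_le hs (hσ i)
  have hne : ∀ i, (σ i : ℂ) ≠ 0 := fun i =>
    Complex.ofReal_ne_zero.mpr (ne_of_gt (hpos i))
  have hX : X = (X * Matrix.diagonal (fun i => (σ i : ℂ))) *
      Matrix.diagonal (fun i => ((σ i : ℂ))⁻¹) := by
    rw [Matrix.mul_assoc, Matrix.diagonal_mul_diagonal]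
    have h0 : (fun i => (σ i : ℂ) * ((σ i : ℂ))⁻¹) = fun _ => (1 : ℂ) := by
      funext i; exact mul_inv_cancel₀ (hne i)
    rw [h0, Matrix.diagonal_one, Matrix.mul_one]
  have hdinv : ‖Matrix.diagonal (fun i => ((σ i : ℂ))⁻¹)‖ ≤ s⁻¹ := by
    apply aux_diag_le _ _ (by positivity)
    intro i
    rw [norm_inv, Complex.norm_real, Real.norm_of_nonneg (le_of_lt (hpos i))]
    exact inv_anti₀ hs (hσ i)
  have h1 : ‖X‖ ≤ ‖X * Matrix.diagonal (fun i => (σ i : ℂ))‖ * s⁻¹ := by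
    calc ‖X‖ = ‖(X * Matrix.diagonal (fun i => (σ i : ℂ))) *
        Matrix.diagonal (fun i => ((σ i : ℂ))⁻¹)‖ := by rw [← hX]
      _ ≤ ‖X * Matrix.diagonal (fun i => (σ i : ℂ))‖ *
          ‖Matrix.diagonal (fun i => ((σ i : ℂ))⁻¹)‖ := Matrix.l2_opNorm_mul _ _
      _ ≤ _ := mul_le_mul_of_nonneg_left hdinv (norm_nonneg _)
  have hn := norm_nonneg (X * Matrix.diagonal (fun i => (σ i : ℂ)))
  rw [mul_comm, ← le_div_iff₀ hs]
  calc ‖X‖ ≤ ‖X * Matrix.diagonal (fun i => (σ i : ℂ))‖ * s⁻¹ := h1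
    _ = _ := by field_simp

/-- Bound (6.17) of the paper: if `gap = σ_min(Σ₁) − ‖Σ̂₂‖ > 0`, then
`max(‖Ũ₂₁‖,‖Ṽ₂₁‖) ≤ (max(‖R₂‖,‖S₂‖)/gap)·max(‖Ũ₃₁‖,‖Ṽ₃₁‖)`. -/
theorem svd_middle_block_bound
    {m n k₁ km kn : ℕ} (hmn : n ≤ m) (hk₁ : 1 ≤ k₁)
    (hk₁km : k₁ ≤ km) (hkmm : km ≤ m) (hk₁kn : k₁ ≤ kn) (hknn : kn ≤ n)
    (σ1hat : Fin k₁ → ℝ) (hσ1hat : ∀ i, 0 ≤ σ1hat i)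
    (Sig2hat : Matrix (Fin (km - k₁)) (Fin (kn - k₁)) ℂ)
    (hSig2off : ∀ (i : Fin (km - k₁)) (j : Fin (kn - k₁)), (i : ℕ) ≠ (j : ℕ) → Sig2hat i j = 0)
    (hSig2diag : ∀ (i : Fin (km - k₁)) (j : Fin (kn - k₁)), (i : ℕ) = (j : ℕ) →
      ∃ r : ℝ, 0 ≤ r ∧ Sig2hat i j = (r : ℂ))
    (R : Matrix (Fin k₁ ⊕ Fin (km - k₁)) (Fin (n - kn)) ℂ)
    (S : Matrix (Fin (m - km)) (Fin k₁ ⊕ Fin (kn - k₁)) ℂ)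
    (A3 : Matrix (Fin (m - km)) (Fin (n - kn)) ℂ)
    (U : Matrix ((Fin k₁ ⊕ Fin (km - k₁)) ⊕ Fin (m - km)) (Fin k₁) ℂ)
    (V : Matrix ((Fin k₁ ⊕ Fin (kn - k₁)) ⊕ Fin (n - kn)) (Fin k₁) ℂ)
    (hU : Uᴴ * U = 1) (hV : Vᴴ * V = 1)
    (σ1 : Fin k₁ → ℝ) (hσ1 : ∀ i, 0 < σ1 i)
    (hAV :
      (Matrix.fromBlocks
          (Matrix.fromBlocks (Matrix.diagonal fun i => Complex.ofReal (σ1hat i)) 0 0 Sig2hat)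
          R S A3) * V = U * Matrix.diagonal fun i => Complex.ofReal (σ1 i))
    (hAU :
      (Matrix.fromBlocks
          (Matrix.fromBlocks (Matrix.diagonal fun i => Complex.ofReal (σ1hat i)) 0 0 Sig2hat)
          R S A3)ᴴ * U = V * Matrix.diagonal fun i => Complex.ofReal (σ1 i))
    (gap : ℝ)
    (hgapDef : gap = (⨅ i, σ1 i) - ‖Sig2hat‖)
    (hgap : 0 < gap) :
    max ‖U.submatrix (fun i => Sum.inl (Sum.inr i) :
            Fin (km - k₁) → (Fin k₁ ⊕ Fin (km - k₁)) ⊕ Fin (m - km)) id‖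
        ‖V.submatrix (fun i => Sum.inl (Sum.inr i) :
            Fin (kn - k₁) → (Fin k₁ ⊕ Fin (kn - k₁)) ⊕ Fin (n - kn)) id‖ ≤
      (max ‖R.submatrix Sum.inr id‖ ‖S.submatrix id Sum.inr‖ / gap) *
        max ‖U.submatrix (Sum.inr : Fin (m - km) → _) id‖
          ‖V.submatrix (Sum.inr : Fin (n - kn) → _) id‖ := by
  haveI : Nonempty (Fin k₁) := ⟨⟨0, hk₁⟩⟩
  set U2 := U.submatrix (fun i => Sum.inl (Sum.inr i) :
      Fin (km - k₁) → (Fin k₁ ⊕ Fin (km - k₁)) ⊕ Fin (m - km)) id with hU2def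
  set V2 := V.submatrix (fun i => Sum.inl (Sum.inr i) :
      Fin (kn - k₁) → (Fin k₁ ⊕ Fin (kn - k₁)) ⊕ Fin (n - kn)) id with hV2def
  set U3 := U.submatrix (Sum.inr : Fin (m - km) → _) id with hU3def
  set V3 := V.submatrix (Sum.inr : Fin (n - kn) → _) id with hV3def
  set R2 := R.submatrix Sum.inr id with hR2def
  set S2 := S.submatrix id Sum.inr with hS2def
  set s := ⨅ i, σ1 i with hsdef
  have hsle : ∀ i, s ≤ σ1 i := fun i => ciInf_le (Finite.bddBelow_range σ1) i
  have hspos : 0 < s := by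
    obtain ⟨i0, hi0⟩ := Finite.exists_min σ1
    have h1 : σ1 i0 ≤ s := le_ciInf hi0
    exact lt_of_lt_of_le (hσ1 i0) h1
  -- block equation from hAV
  have hEq1 : U2 * (Matrix.diagonal fun i => Complex.ofReal (σ1 i)) =
      Sig2hat * V2 + R2 * V3 := by
    ext i j
    have h := congrFun (congrFun hAV (Sum.inl (Sum.inr i))) j
    simp only [Matrix.mul_apply, Fintype.sum_sum_type, Matrix.fromBlocks_apply₁₁,
      Matrix.fromBlocks_apply₁₂, Matrix.fromBlocks_apply₂₁, Matrix.fromBlocks_apply₂₂,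
      Matrix.zero_apply, zero_mul, Finset.sum_const_zero, zero_add, add_zero,
      Matrix.submatrix_apply, id_eq, Matrix.add_apply, hU2def, hV2def, hV3def, hR2def] at h ⊢
    exact h.symm
  -- block equation from hAU
  have hEq2 : V2 * (Matrix.diagonal fun i => Complex.ofReal (σ1 i)) =
      Sig2hatᴴ * U2 + S2ᴴ * U3 := by
    ext i j
    have h := congrFun (congrFun hAU (Sum.inl (Sum.inr i))) j
    simp only [Matrix.mul_apply, Fintype.sum_sum_type, Matrix.conjTranspose_apply,
      Matrix.fromBlocks_apply₁₁, Matrix.fromBlocks_apply₁₂, Matrix.fromBlocks_apply₂₁,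
      Matrix.fromBlocks_apply₂₂, Matrix.zero_apply, zero_mul, star_zero,
      Finset.sum_const_zero, zero_add, add_zero,
      Matrix.submatrix_apply, id_eq, Matrix.add_apply, hU2def, hV2def, hU3def, hS2def] at h ⊢
    exact h.symm
  -- norm inequalities
  set a := max ‖U2‖ ‖V2‖ with hadef
  set b := max ‖U3‖ ‖V3‖ with hbdef
  set ρ := max ‖R2‖ ‖S2‖ with hρdef
  set t := ‖Sig2hat‖ with htdef
  have hb0 : 0 ≤ b := le_trans (norm_nonneg _) (le_max_left _ _)
  have hρ0 : 0 ≤ ρ := le_trans (norm_nonneg _) (le_max_left _ _)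
  have hI1 : s * ‖U2‖ ≤ t * a + ρ * b := by
    calc s * ‖U2‖ ≤ ‖U2 * (Matrix.diagonal fun i => Complex.ofReal (σ1 i))‖ :=
          aux_lower U2 σ1 s hspos hsle
      _ = ‖Sig2hat * V2 + R2 * V3‖ := by rw [hEq1]
      _ ≤ ‖Sig2hat * V2‖ + ‖R2 * V3‖ := norm_add_le _ _
      _ ≤ ‖Sig2hat‖ * ‖V2‖ + ‖R2‖ * ‖V3‖ :=
          add_le_add (Matrix.l2_opNorm_mul _ _) (Matrix.l2_opNorm_mul _ _)
      _ ≤ t * a + ρ * b := by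
          apply add_le_add
          · exact mul_le_mul_of_nonneg_left (le_max_right _ _) (norm_nonneg _)
          · exact mul_le_mul (le_max_left _ _) (le_max_right _ _) (norm_nonneg _) hρ0
  have hI2 : s * ‖V2‖ ≤ t * a + ρ * b := by
    calc s * ‖V2‖ ≤ ‖V2 * (Matrix.diagonal fun i => Complex.ofReal (σ1 i))‖ :=
          aux_lower V2 σ1 s hspos hsle
      _ = ‖Sig2hatᴴ * U2 + S2ᴴ * U3‖ := by rw [hEq2]
      _ ≤ ‖Sig2hatᴴ * U2‖ + ‖S2ᴴ * U3‖ := norm_add_le _ _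
      _ ≤ ‖Sig2hatᴴ‖ * ‖U2‖ + ‖S2ᴴ‖ * ‖U3‖ :=
          add_le_add (Matrix.l2_opNorm_mul _ _) (Matrix.l2_opNorm_mul _ _)
      _ = ‖Sig2hat‖ * ‖U2‖ + ‖S2‖ * ‖U3‖ := by
          rw [Matrix.l2_opNorm_conjTranspose, Matrix.l2_opNorm_conjTranspose]
      _ ≤ t * a + ρ * b := by
          apply add_le_add
          · exact mul_le_mul_of_nonneg_left (le_max_left _ _) (norm_nonneg _)
          · exact mul_le_mul (le_max_right _ _) (le_max_left _ _) (norm_nonneg _) hρ0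
  have hsa : s * a ≤ t * a + ρ * b := by
    rcases max_choice ‖U2‖ ‖V2‖ with h | h
    · calc s * a = s * ‖U2‖ := by rw [hadef, h]
        _ ≤ t * a + ρ * b := hI1
    · calc s * a = s * ‖V2‖ := by rw [hadef, h]
        _ ≤ t * a + ρ * b := hI2
  have hgapa : gap * a ≤ ρ * b := by
    have : (s - t) * a ≤ ρ * b := by nlinarith
    rw [hgapDef]; rw [hsdef, htdef] at *; linarith
  rw [div_mul_eq_mul_div, le_div_iff₀ hgap]
  calc a * gap = gap * a := by ring
    _ ≤ ρ * b := hgapa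
end

section
/- Let H be a complex Hilbert space, A : H → H a bounded self-adjoint operator, and P₁, P₂, P₃ orthogonal projections with mutually orthogonal ranges satisfying P₁ + P₂ + P₃ = I and P₁ ∘ A ∘ P₂ = 0. Suppose u ∈ H is a unit vector with Au = λu for some real λ, and set uᵢ := Pᵢu for i = 1, 2, 3. Assume there are constants gap > 0 and Gap > 0 such that ‖P₂(Av) − λv‖ ≥ gap·‖v‖ for all v in the range of P₂, and ‖P₃(Av) − λv‖ ≥ Gap·‖v‖ for all v in the range of P₃. Set ‖R‖ := ‖P₃ ∘ A ∘ (P₁ + P₂)‖ and ‖R₂‖ := ‖P₃ ∘ A ∘ P₂‖ (operator norms). Then √(‖u₂‖² + ‖u₃‖²) ≤ (‖R‖/Gap) · √(1 + ‖R₂‖²/gap²). -/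
/-- Theorem 7.1, bound (7.1) of the paper (self-adjoint operator on a Hilbert space):
`√(‖u₂‖² + ‖u₃‖²) ≤ (‖R‖/Gap) · √(1 + ‖R₂‖²/gap²)`. -/
theorem selfadjoint_ritz_bound
    {H : Type*} [NormedAddCommGroup H] [InnerProductSpace ℂ H] [CompleteSpace H]
    (A : H →L[ℂ] H) (hA : IsSelfAdjoint A)
    (P₁ P₂ P₃ : H →L[ℂ] H)
    (hP₁sa : IsSelfAdjoint P₁) (hP₂sa : IsSelfAdjoint P₂) (hP₃sa : IsSelfAdjoint P₃)
    (hP₁idem : P₁ ∘L P₁ = P₁) (hP₂idem : P₂ ∘L P₂ = P₂) (hP₃idem : P₃ ∘L P₃ = P₃)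
    (hP₁₂ : P₁ ∘L P₂ = 0) (hP₁₃ : P₁ ∘L P₃ = 0) (hP₂₃ : P₂ ∘L P₃ = 0)
    (hsum : P₁ + P₂ + P₃ = 1)
    (hRR : P₁ ∘L A ∘L P₂ = 0)
    (u : H) (hu : ‖u‖ = 1) (lam : ℝ) (hAu : A u = (lam : ℂ) • u)
    (gap Gap : ℝ) (hgap : 0 < gap) (hGap : 0 < Gap)
    (hgapb : ∀ v ∈ Set.range ⇑P₂, gap * ‖v‖ ≤ ‖P₂ (A v) - (lam : ℂ) • v‖)
    (hGapb : ∀ v ∈ Set.range ⇑P₃, Gap * ‖v‖ ≤ ‖P₃ (A v) - (lam : ℂ) • v‖) :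
    Real.sqrt (‖P₂ u‖ ^ 2 + ‖P₃ u‖ ^ 2) ≤
      (‖P₃ ∘L A ∘L (P₁ + P₂)‖ / Gap) *
        Real.sqrt (1 + ‖P₃ ∘L A ∘L P₂‖ ^ 2 / gap ^ 2) := by
  -- decomposition of u
  have hu' : P₁ u + P₂ u + P₃ u = u := by
    have := ContinuousLinearMap.ext_iff.mp hsum u
    simpa using this
  -- P₂ ∘L A ∘L P₁ = 0 (adjoint of hRR)
  have hP₂AP₁ : P₂ ∘L A ∘L P₁ = 0 := by
    have h := congrArg star hRR
    rw [show P₁ ∘L A ∘L P₂ = P₁ * A * P₂ from mul_assoc P₁ A P₂ ▸ rfl] at h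
    have h' : P₂ * (A * P₁) = 0 := by
      simpa [star_mul, hA.star_eq, hP₁sa.star_eq, hP₂sa.star_eq, mul_assoc] using h
    exact h'
  have hP₂AP₁u : P₂ (A (P₁ u)) = 0 := ContinuousLinearMap.ext_iff.mp hP₂AP₁ u
  have hP₃P₃u : P₃ (P₃ u) = P₃ u := ContinuousLinearMap.ext_iff.mp hP₃idem u
  -- P₃ projection of eigen-equation
  have h3 : P₃ (A (P₃ u)) - (lam : ℂ) • (P₃ u) = -((P₃ ∘L A ∘L (P₁ + P₂)) u) := by
    have h := congrArg (fun x => P₃ (A x)) hu'.symm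
    simp only [map_add] at h
    rw [hAu] at h
    simp only [map_smul] at h
    simp only [ContinuousLinearMap.comp_apply, ContinuousLinearMap.add_apply, map_add]
    rw [h]
    abel
  -- P₂ projection of eigen-equation
  have h2 : P₂ (A (P₂ u)) - (lam : ℂ) • (P₂ u) = -((P₂ ∘L A ∘L P₃) (P₃ u)) := by
    have h := congrArg (fun x => P₂ (A x)) hu'.symm
    simp only [map_add] at h
    rw [hAu] at h
    simp only [map_smul, hP₂AP₁u, zero_add] at h
    simp only [ContinuousLinearMap.comp_apply, hP₃P₃u]
    rw [h]
    abel
  -- norm bounds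
  have hb : Gap * ‖P₃ u‖ ≤ ‖P₃ ∘L A ∘L (P₁ + P₂)‖ := by
    have h := hGapb (P₃ u) ⟨u, rfl⟩
    rw [h3, norm_neg] at h
    calc Gap * ‖P₃ u‖ ≤ ‖(P₃ ∘L A ∘L (P₁ + P₂)) u‖ := h
      _ ≤ ‖P₃ ∘L A ∘L (P₁ + P₂)‖ * ‖u‖ := ContinuousLinearMap.le_opNorm _ _
      _ = ‖P₃ ∘L A ∘L (P₁ + P₂)‖ := by rw [hu, mul_one]
  have hnorm_eq : ‖P₂ ∘L A ∘L P₃‖ = ‖P₃ ∘L A ∘L P₂‖ := by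
    have : P₂ ∘L A ∘L P₃ = star (P₃ ∘L A ∘L P₂) := by
      rw [show P₃ ∘L A ∘L P₂ = P₃ * A * P₂ from mul_assoc P₃ A P₂ ▸ rfl]
      simp [star_mul, hA.star_eq, hP₂sa.star_eq, hP₃sa.star_eq, mul_assoc]
      rfl
    rw [this, norm_star]
  have ha : gap * ‖P₂ u‖ ≤ ‖P₃ ∘L A ∘L P₂‖ * ‖P₃ u‖ := by
    have h := hgapb (P₂ u) ⟨u, rfl⟩
    rw [h2, norm_neg] at h
    calc gap * ‖P₂ u‖ ≤ ‖(P₂ ∘L A ∘L P₃) (P₃ u)‖ := h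
      _ ≤ ‖P₂ ∘L A ∘L P₃‖ * ‖P₃ u‖ := ContinuousLinearMap.le_opNorm _ _
      _ = ‖P₃ ∘L A ∘L P₂‖ * ‖P₃ u‖ := by rw [hnorm_eq]
  -- arithmetic
  set a := ‖P₂ u‖ with ha'
  set b := ‖P₃ u‖ with hb'
  set r := ‖P₃ ∘L A ∘L (P₁ + P₂)‖ with hr'
  set r₂ := ‖P₃ ∘L A ∘L P₂‖ with hr₂'
  have ha0 : 0 ≤ a := norm_nonneg _
  have hb0 : 0 ≤ b := norm_nonneg _
  have hr0 : 0 ≤ r := norm_nonneg _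
  have hr₂0 : 0 ≤ r₂ := norm_nonneg _
  have hrG : 0 ≤ r / Gap := div_nonneg hr0 hGap.le
  rw [show (r / Gap) * Real.sqrt (1 + r₂ ^ 2 / gap ^ 2)
      = Real.sqrt ((r / Gap) ^ 2 * (1 + r₂ ^ 2 / gap ^ 2)) by
    rw [Real.sqrt_mul (by positivity), Real.sqrt_sq hrG]]
  apply Real.sqrt_le_sqrt
  have hble : b ≤ r / Gap := (le_div_iff₀ hGap).mpr (by linarith)
  have hb2 : b ^ 2 ≤ (r / Gap) ^ 2 := pow_le_pow_left₀ hb0 hble 2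
  have hale : a ≤ r₂ * b / gap := (le_div_iff₀ hgap).mpr (by linarith)
  have ha2 : a ^ 2 ≤ (r₂ * b / gap) ^ 2 := pow_le_pow_left₀ ha0 hale 2
  have h5 : (r₂ * b / gap) ^ 2 ≤ (r / Gap) ^ 2 * (r₂ ^ 2 / gap ^ 2) := by
    have e : (r₂ * b / gap) ^ 2 = b ^ 2 * (r₂ ^ 2 / gap ^ 2) := by ring
    rw [e]
    exact mul_le_mul_of_nonneg_right hb2 (by positivity)
  have e2 : (r / Gap) ^ 2 * (1 + r₂ ^ 2 / gap ^ 2)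
      = (r / Gap) ^ 2 + (r / Gap) ^ 2 * (r₂ ^ 2 / gap ^ 2) := by ring
  rw [e2]
  linarith
end

section
/- Let H be a complex Hilbert space, A : H → H a bounded self-adjoint operator, and P₁, P₂, P₃ orthogonal projections with mutually orthogonal ranges satisfying P₁ + P₂ + P₃ = I and P₁ ∘ A ∘ P₂ = 0. Suppose u ∈ H is a unit vector with Au = λu for some real λ, and set uᵢ := Pᵢu. Assume there are constants gap > 0 and Gap such that ‖P₂(Av) − λv‖ ≥ gap·‖v‖ for all v in the range of P₂, and ‖P₃(Av) − λv‖ ≥ Gap·‖v‖ for all v in the range of P₃. Set ‖R₁‖ := ‖P₃ ∘ A ∘ P₁‖ and ‖R₂‖ := ‖P₃ ∘ A ∘ P₂‖ (operator norms). If Gap > ‖R₂‖²/gap, then √(‖u₂‖² + ‖u₃‖²) ≤ (‖R₁‖ / (Gap − ‖R₂‖²/gap)) · √(1 + ‖R₂‖²/gap²). -/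
open ContinuousLinearMap in
/-- Theorem 7.1, bound (7.2) of the paper (self-adjoint operator on a Hilbert space):
if `Gap > ‖R₂‖²/gap`, then
`√(‖u₂‖² + ‖u₃‖²) ≤ (‖R₁‖/(Gap − ‖R₂‖²/gap)) · √(1 + ‖R₂‖²/gap²)`. -/
theorem selfadjoint_ritz_refined_bound
    {H : Type*} [NormedAddCommGroup H] [InnerProductSpace ℂ H] [CompleteSpace H]
    (A : H →L[ℂ] H) (hA : IsSelfAdjoint A)
    (P₁ P₂ P₃ : H →L[ℂ] H)
    (hP₁sa : IsSelfAdjoint P₁) (hP₂sa : IsSelfAdjoint P₂) (hP₃sa : IsSelfAdjoint P₃)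
    (hP₁idem : P₁ ∘L P₁ = P₁) (hP₂idem : P₂ ∘L P₂ = P₂) (hP₃idem : P₃ ∘L P₃ = P₃)
    (hP₁₂ : P₁ ∘L P₂ = 0) (hP₁₃ : P₁ ∘L P₃ = 0) (hP₂₃ : P₂ ∘L P₃ = 0)
    (hsum : P₁ + P₂ + P₃ = 1)
    (hRR : P₁ ∘L A ∘L P₂ = 0)
    (u : H) (hu : ‖u‖ = 1) (lam : ℝ) (hAu : A u = (lam : ℂ) • u)
    (gap Gap : ℝ) (hgap : 0 < gap)
    (hGap : ‖P₃ ∘L A ∘L P₂‖ ^ 2 / gap < Gap)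
    (hgapb : ∀ v ∈ Set.range ⇑P₂, gap * ‖v‖ ≤ ‖P₂ (A v) - (lam : ℂ) • v‖)
    (hGapb : ∀ v ∈ Set.range ⇑P₃, Gap * ‖v‖ ≤ ‖P₃ (A v) - (lam : ℂ) • v‖) :
    Real.sqrt (‖P₂ u‖ ^ 2 + ‖P₃ u‖ ^ 2) ≤
      (‖P₃ ∘L A ∘L P₁‖ / (Gap - ‖P₃ ∘L A ∘L P₂‖ ^ 2 / gap)) *
        Real.sqrt (1 + ‖P₃ ∘L A ∘L P₂‖ ^ 2 / gap ^ 2) := by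
  rw [isSelfAdjoint_iff'] at hA hP₁sa hP₂sa hP₃sa
  set u₁ := P₁ u with hu₁
  set u₂ := P₂ u with hu₂
  set u₃ := P₃ u with hu₃
  set R1 := ‖P₃ ∘L A ∘L P₁‖ with hR1
  set r := ‖P₃ ∘L A ∘L P₂‖ with hr
  have hr0 : 0 ≤ r := norm_nonneg _
  have hR10 : 0 ≤ R1 := norm_nonneg _
  -- P₂ A P₁ = 0
  have h21 : P₂ ∘L A ∘L P₁ = 0 := by
    have := congrArg ContinuousLinearMap.adjoint hRR
    rw [adjoint_comp, adjoint_comp, hA, hP₁sa, hP₂sa, comp_assoc] at this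
    simpa using this
  -- norm of P₂ A P₃ equals r
  have hnorm23 : ‖P₂ ∘L A ∘L P₃‖ = r := by
    have : ContinuousLinearMap.adjoint (P₃ ∘L A ∘L P₂) = P₂ ∘L A ∘L P₃ := by
      rw [adjoint_comp, adjoint_comp, hA, hP₂sa, hP₃sa, comp_assoc]
    rw [← this, hr]
    exact ContinuousLinearMap.adjoint.norm_map _
  -- decomposition u = u₁ + u₂ + u₃
  have hdecomp : u₁ + u₂ + u₃ = u := by
    have := DFunLike.congr_fun hsum u
    simpa using this
  -- u₁ norm ≤ 1
  have hu₁le : ‖u₁‖ ≤ 1 := by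
    rcases eq_or_ne ‖u₁‖ 0 with h | h
    · rw [h]; norm_num
    have key : ‖u₁‖ ^ 2 ≤ 1 * ‖u₁‖ := by
      have h1 : (‖u₁‖ : ℝ) ^ 2 = ‖(inner ℂ u₁ u₁ : ℂ)‖ := by
        rw [@inner_self_eq_norm_sq_to_K ℂ]; simp
      have h2 : (inner ℂ u₁ u₁ : ℂ) = inner ℂ u (P₁ u₁) := by
        rw [← ContinuousLinearMap.adjoint_inner_right P₁ u u₁, hP₁sa]
      have h3 : P₁ u₁ = u₁ := by
        have := DFunLike.congr_fun hP₁idem u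
        simpa using this
      rw [h1, h2, h3]
      calc ‖(inner ℂ u u₁ : ℂ)‖ ≤ ‖u‖ * ‖u₁‖ := norm_inner_le_norm u u₁
        _ = 1 * ‖u₁‖ := by rw [hu]
    have hpos : 0 < ‖u₁‖ := lt_of_le_of_ne (norm_nonneg u₁) (Ne.symm h)
    nlinarith [key, hpos]
  have hP₂u₂ : P₂ u₂ = u₂ := by
    have := DFunLike.congr_fun hP₂idem u; simpa using this
  have hP₃u₃ : P₃ u₃ = u₃ := by
    have := DFunLike.congr_fun hP₃idem u; simpa using this
  -- key identity: λ•uᵢ = Pᵢ(Au₁)+Pᵢ(Au₂)+Pᵢ(Au₃)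
  have hkey : ∀ P : H →L[ℂ] H, P (A u₁) + P (A u₂) + P (A u₃) = (lam : ℂ) • P u := by
    intro P
    have : A u₁ + A u₂ + A u₃ = (lam : ℂ) • u := by
      rw [← map_add, ← map_add, hdecomp, hAu]
    calc P (A u₁) + P (A u₂) + P (A u₃) = P (A u₁ + A u₂ + A u₃) := by
          rw [map_add, map_add]
      _ = (lam : ℂ) • P u := by rw [this, map_smul]
  -- step B: gap ‖u₂‖ ≤ r ‖u₃‖
  have hB : gap * ‖u₂‖ ≤ r * ‖u₃‖ := by
    have h1 := hgapb u₂ ⟨u, rfl⟩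
    have h2 : P₂ (A u₁) = 0 := by
      have := DFunLike.congr_fun h21 u
      simpa [comp_apply] using this
    have h3 : P₂ (A u₂) - (lam : ℂ) • u₂ = -(P₂ (A u₃)) := by
      have := hkey P₂
      rw [h2, ← hu₂] at this
      rw [← this]; abel
    have h4 : ‖P₂ (A u₃)‖ ≤ r * ‖u₃‖ := by
      have : (P₂ ∘L A ∘L P₃) u₃ = P₂ (A u₃) := by simp [comp_apply, hP₃u₃]
      calc ‖P₂ (A u₃)‖ = ‖(P₂ ∘L A ∘L P₃) u₃‖ := by rw [this]
        _ ≤ ‖P₂ ∘L A ∘L P₃‖ * ‖u₃‖ := le_opNorm _ _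
        _ = r * ‖u₃‖ := by rw [hnorm23]
    calc gap * ‖u₂‖ ≤ ‖P₂ (A u₂) - (lam : ℂ) • u₂‖ := h1
      _ = ‖P₂ (A u₃)‖ := by rw [h3, norm_neg]
      _ ≤ r * ‖u₃‖ := h4
  -- step C: Gap ‖u₃‖ ≤ R1 + r ‖u₂‖
  have hC : Gap * ‖u₃‖ ≤ R1 + r * ‖u₂‖ := by
    have h1 := hGapb u₃ ⟨u, rfl⟩
    have h3 : P₃ (A u₃) - (lam : ℂ) • u₃ = -(P₃ (A u₁) + P₃ (A u₂)) := by
      have := hkey P₃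
      rw [← hu₃] at this
      rw [← this]; abel
    have h4 : ‖P₃ (A u₁)‖ ≤ R1 := by
      have : (P₃ ∘L A ∘L P₁) u = P₃ (A u₁) := by simp [comp_apply, hu₁]
      calc ‖P₃ (A u₁)‖ = ‖(P₃ ∘L A ∘L P₁) u‖ := by rw [this]
        _ ≤ R1 * ‖u‖ := le_opNorm _ _
        _ = R1 := by rw [hu, mul_one]
    have h5 : ‖P₃ (A u₂)‖ ≤ r * ‖u₂‖ := by
      have : (P₃ ∘L A ∘L P₂) u₂ = P₃ (A u₂) := by simp [comp_apply, hP₂u₂]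
      calc ‖P₃ (A u₂)‖ = ‖(P₃ ∘L A ∘L P₂) u₂‖ := by rw [this]
        _ ≤ r * ‖u₂‖ := le_opNorm _ _
    calc Gap * ‖u₃‖ ≤ ‖P₃ (A u₃) - (lam : ℂ) • u₃‖ := h1
      _ = ‖P₃ (A u₁) + P₃ (A u₂)‖ := by rw [h3, norm_neg]
      _ ≤ ‖P₃ (A u₁)‖ + ‖P₃ (A u₂)‖ := norm_add_le _ _
      _ ≤ R1 + r * ‖u₂‖ := add_le_add h4 h5
  have hu₂le : ‖u₂‖ ≤ (r / gap) * ‖u₃‖ := by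
    rw [div_mul_eq_mul_div, le_div_iff₀ hgap]
    linarith
  have hD : 0 < Gap - r ^ 2 / gap := by linarith
  have hu₃le : ‖u₃‖ ≤ R1 / (Gap - r ^ 2 / gap) := by
    rw [le_div_iff₀ hD]
    have : Gap * ‖u₃‖ ≤ R1 + r * ((r / gap) * ‖u₃‖) := by
      calc Gap * ‖u₃‖ ≤ R1 + r * ‖u₂‖ := hC
        _ ≤ R1 + r * ((r / gap) * ‖u₃‖) := by
            gcongr
    have h6 : r * ((r / gap) * ‖u₃‖) = r ^ 2 / gap * ‖u₃‖ := by ring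
    rw [h6] at this
    have h8 : ‖u₃‖ * (Gap - r ^ 2 / gap) = Gap * ‖u₃‖ - r ^ 2 / gap * ‖u₃‖ := by ring
    linarith
  -- final assembly
  have hfin : ‖u₂‖ ^ 2 + ‖u₃‖ ^ 2 ≤ (1 + r ^ 2 / gap ^ 2) * ‖u₃‖ ^ 2 := by
    have : ‖u₂‖ ^ 2 ≤ (r / gap) ^ 2 * ‖u₃‖ ^ 2 := by
      rw [← mul_pow]
      exact pow_le_pow_left₀ (norm_nonneg _) hu₂le 2
    have h7 : (r / gap) ^ 2 * ‖u₃‖ ^ 2 = r ^ 2 / gap ^ 2 * ‖u₃‖ ^ 2 := by ring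
    rw [h7] at this
    calc ‖u₂‖ ^ 2 + ‖u₃‖ ^ 2 ≤ r ^ 2 / gap ^ 2 * ‖u₃‖ ^ 2 + ‖u₃‖ ^ 2 := by linarith
      _ = (1 + r ^ 2 / gap ^ 2) * ‖u₃‖ ^ 2 := by ring
  calc Real.sqrt (‖u₂‖ ^ 2 + ‖u₃‖ ^ 2)
      ≤ Real.sqrt ((1 + r ^ 2 / gap ^ 2) * ‖u₃‖ ^ 2) := Real.sqrt_le_sqrt hfin
    _ = Real.sqrt (1 + r ^ 2 / gap ^ 2) * ‖u₃‖ := by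
        rw [Real.sqrt_mul (by positivity), Real.sqrt_sq (norm_nonneg _)]
    _ ≤ Real.sqrt (1 + r ^ 2 / gap ^ 2) * (R1 / (Gap - r ^ 2 / gap)) := by
        gcongr
    _ = (R1 / (Gap - r ^ 2 / gap)) * Real.sqrt (1 + r ^ 2 / gap ^ 2) := mul_comm _ _
end

section
/- Let H be a complex Hilbert space, A : H → H a bounded self-adjoint operator, and P₁, P₂, P₃ orthogonal projections with mutually orthogonal ranges satisfying P₁ + P₂ + P₃ = I and P₁ ∘ A ∘ P₂ = 0. Suppose further that P₂ = Σ_{i=2}^{k} P_{2,i}, where the P_{2,i} are rank-one orthogonal projections with pairwise orthogonal ranges, and that there are real numbers λ̂₂,…,λ̂ₖ with P_{2,i} ∘ A ∘ P₂ = λ̂ᵢ·P_{2,i} for each i. Suppose u ∈ H is a unit vector with Au = λu for some real λ satisfying λ ≠ λ̂ᵢ for all i, and set uᵢ := Pᵢu. Assume there is a constant Gap with ‖P₃(Av) − λv‖ ≥ Gap·‖v‖ for all v in the range of P₃. Set ‖R₁‖ := ‖P₃ ∘ A ∘ P₁‖ and ‖rᵢ‖ := ‖P₃ ∘ A ∘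 P_{2,i}‖ (operator norms). If Gap > Σ_{i=2}^{k} ‖rᵢ‖²/|λ − λ̂ᵢ|, then √(‖u₂‖² + ‖u₃‖²) ≤ (‖R₁‖ / (Gap − Σ_{i=2}^{k} ‖rᵢ‖²/|λ − λ̂ᵢ|)) · √(1 + (Σ_{i=2}^{k} ‖rᵢ‖/|λ − λ̂ᵢ|)²). -/
set_option maxHeartbeats 1000000

open ContinuousLinearMap in
private lemma aux_norm_adjoint {H : Type*} [NormedAddCommGroup H] [InnerProductSpace ℂ H]
    [CompleteSpace H] (A : H →L[ℂ] H) : ‖adjoint A‖ = ‖A‖ :=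
  (adjoint : (H →L[ℂ] H) ≃ₗᵢ⋆[ℂ] (H →L[ℂ] H)).norm_map A

/-- Theorem 7.1, bound (7.3) of the paper (self-adjoint operator on a Hilbert space,
individual residuals): if `P₂ = Σᵢ P_{2,i}` with rank-one orthogonal projections
`P_{2,i}` satisfying `P_{2,i} ∘ A ∘ P₂ = λ̂ᵢ P_{2,i}`, and
`Gap > Σᵢ ‖rᵢ‖²/|λ − λ̂ᵢ|`, then
`√(‖u₂‖² + ‖u₃‖²) ≤ (‖R₁‖/(Gap − Σᵢ ‖rᵢ‖²/|λ−λ̂ᵢ|)) · √(1 + (Σᵢ ‖rᵢ‖/|λ−λ̂ᵢ|)²)`. -/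
theorem selfadjoint_ritz_individual_bound
    {H : Type*} [NormedAddCommGroup H] [InnerProductSpace ℂ H] [CompleteSpace H]
    {k : ℕ} (hk : 2 ≤ k)
    (A : H →L[ℂ] H) (hA : IsSelfAdjoint A)
    (P₁ P₂ P₃ : H →L[ℂ] H)
    (hP₁sa : IsSelfAdjoint P₁) (hP₂sa : IsSelfAdjoint P₂) (hP₃sa : IsSelfAdjoint P₃)
    (hP₁idem : P₁ ∘L P₁ = P₁) (hP₂idem : P₂ ∘L P₂ = P₂) (hP₃idem : P₃ ∘L P₃ = P₃)
    (hP₁₂ : P₁ ∘L P₂ = 0) (hP₁₃ : P₁ ∘L P₃ = 0) (hP₂₃ : P₂ ∘L P₃ = 0)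
    (hsum : P₁ + P₂ + P₃ = 1)
    (hRR : P₁ ∘L A ∘L P₂ = 0)
    (P2i : Fin (k - 1) → (H →L[ℂ] H))
    (hP2isa : ∀ i, IsSelfAdjoint (P2i i))
    (hP2iidem : ∀ i, P2i i ∘L P2i i = P2i i)
    (hP2irank : ∀ i, Module.finrank ℂ (LinearMap.range (P2i i : H →ₗ[ℂ] H)) = 1)
    (hP2iorth : ∀ i j, i ≠ j → P2i i ∘L P2i j = 0)
    (hP₂sum : P₂ = ∑ i, P2i i)
    (lamhat : Fin (k - 1) → ℝ)
    (hdiag : ∀ i, P2i i ∘L A ∘L P₂ = (lamhat i : ℂ) • P2i i)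
    (u : H) (hu : ‖u‖ = 1) (lam : ℝ) (hAu : A u = (lam : ℂ) • u)
    (hne : ∀ i, lam ≠ lamhat i)
    (Gap : ℝ)
    (hGapb : ∀ v ∈ Set.range ⇑P₃, Gap * ‖v‖ ≤ ‖P₃ (A v) - (lam : ℂ) • v‖)
    (hGap : (∑ i, ‖P₃ ∘L A ∘L P2i i‖ ^ 2 / |lam - lamhat i|) < Gap) :
    Real.sqrt (‖P₂ u‖ ^ 2 + ‖P₃ u‖ ^ 2) ≤
      (‖P₃ ∘L A ∘L P₁‖ /
          (Gap - ∑ i, ‖P₃ ∘L A ∘L P2i i‖ ^ 2 / |lam - lamhat i|)) *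
        Real.sqrt (1 + (∑ i, ‖P₃ ∘L A ∘L P2i i‖ / |lam - lamhat i|) ^ 2) := by
  classical
  let r : Fin (k - 1) → ℝ := fun i => ‖P₃ ∘L A ∘L P2i i‖
  let d : Fin (k - 1) → ℝ := fun i => |lam - lamhat i|
  have hr : ∀ i, r i = ‖P₃ ∘L A ∘L P2i i‖ := fun i => rfl
  have hd : ∀ i, d i = |lam - lamhat i| := fun i => rfl
  have hdpos : ∀ i, 0 < d i := fun i => abs_pos.mpr (sub_ne_zero.mpr (hne i))
  have hrnn : ∀ i, 0 ≤ r i := fun i => norm_nonneg _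
  -- P₂ ∘ P2i i = P2i i
  have hP₂P2i : ∀ i, P₂ ∘L P2i i = P2i i := by
    intro i
    rw [hP₂sum, ContinuousLinearMap.finset_sum_comp]
    rw [Finset.sum_eq_single i (fun j _ hji => hP2iorth j i hji) (by simp)]
    exact hP2iidem i
  -- P₁ ∘ A ∘ P2i i = 0
  have hP₁A2i : ∀ i, P₁ ∘L A ∘L P2i i = 0 := by
    intro i
    calc P₁ ∘L A ∘L P2i i = P₁ ∘L A ∘L (P₂ ∘L P2i i) := by rw [hP₂P2i]
      _ = (P₁ ∘L A ∘L P₂) ∘L P2i i := by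
          rw [ContinuousLinearMap.comp_assoc, ContinuousLinearMap.comp_assoc]
      _ = 0 := by rw [hRR]; ext x; simp
  -- P2i i ∘ A ∘ P₁ = 0 by taking adjoints
  have hAdjzero : ∀ i, P2i i ∘L A ∘L P₁ = 0 := by
    intro i
    have h := congrArg ContinuousLinearMap.adjoint (hP₁A2i i)
    rw [ContinuousLinearMap.adjoint_comp, ContinuousLinearMap.adjoint_comp,
      hA.adjoint_eq, (hP2isa i).adjoint_eq, hP₁sa.adjoint_eq, map_zero] at h
    calc P2i i ∘L A ∘L P₁ = (P2i i ∘L A) ∘L P₁ := by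
          rw [ContinuousLinearMap.comp_assoc]
      _ = 0 := h
  -- decomposition of u
  have hu_decomp : P₁ u + P₂ u + P₃ u = u := by
    have h := congrArg (fun T : H →L[ℂ] H => T u) hsum
    simpa using h
  -- key identity
  have hkey : ∀ i, ((lam : ℂ) - (lamhat i : ℂ)) • P2i i u = (P2i i ∘L A ∘L P₃) u := by
    intro i
    have h1 : P2i i (A u) = (lam : ℂ) • P2i i u := by rw [hAu, map_smul]
    have h2 : P2i i (A u)
        = (P2i i ∘L A ∘L P₁) u + (P2i i ∘L A ∘L P₂) u + (P2i i ∘L A ∘L P₃) u := by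
      conv_lhs => rw [← hu_decomp]
      simp only [map_add, ContinuousLinearMap.comp_apply]
    rw [hAdjzero i, hdiag i, h1] at h2
    simp only [ContinuousLinearMap.zero_apply, ContinuousLinearMap.smul_apply,
      zero_add] at h2
    rw [sub_smul, h2]
    abel
  -- norm of P2i A P₃ equals r i (adjoint)
  have hradj : ∀ i, ‖P2i i ∘L A ∘L P₃‖ = r i := by
    intro i
    have h : ContinuousLinearMap.adjoint (P₃ ∘L A ∘L P2i i) = P2i i ∘L A ∘L P₃ := by
      rw [ContinuousLinearMap.adjoint_comp, ContinuousLinearMap.adjoint_comp,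
        hA.adjoint_eq, (hP2isa i).adjoint_eq, hP₃sa.adjoint_eq,
        ContinuousLinearMap.comp_assoc]
    rw [← h, aux_norm_adjoint]
  -- bound on ‖P2i i u‖
  have hbound : ∀ i, ‖P2i i u‖ ≤ r i / d i * ‖P₃ u‖ := by
    intro i
    have h3 : d i * ‖P2i i u‖ = ‖(P2i i ∘L A ∘L P₃) u‖ := by
      rw [← hkey i, norm_smul]
      congr 1
      rw [show ((lam : ℂ) - (lamhat i : ℂ)) = ((lam - lamhat i : ℝ) : ℂ) by push_cast; ring]
      rw [Complex.norm_real, Real.norm_eq_abs]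
    have hP3P3 : P₃ (P₃ u) = P₃ u := by
      have := congrArg (fun T : H →L[ℂ] H => T u) hP₃idem
      simpa using this
    have hP₃u : (P2i i ∘L A ∘L P₃) u = (P2i i ∘L A ∘L P₃) (P₃ u) := by
      simp only [ContinuousLinearMap.comp_apply, hP3P3]
    have h4 : ‖(P2i i ∘L A ∘L P₃) u‖ ≤ r i * ‖P₃ u‖ := by
      rw [hP₃u]
      calc ‖(P2i i ∘L A ∘L P₃) (P₃ u)‖ ≤ ‖P2i i ∘L A ∘L P₃‖ * ‖P₃ u‖ :=
            ContinuousLinearMap.le_opNorm _ _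
        _ = r i * ‖P₃ u‖ := by rw [hradj i]
      ;
    rw [div_mul_eq_mul_div, le_div_iff₀ (hdpos i), mul_comm]
    rw [← h3] at h4
    exact h4
  -- P₂ u as a sum
  have hP₂u : P₂ u = ∑ i, P2i i u := by
    rw [hP₂sum, ContinuousLinearMap.sum_apply]
  set T : ℝ := ∑ i, ‖P₃ ∘L A ∘L P2i i‖ / |lam - lamhat i| with hT
  set S : ℝ := ∑ i, ‖P₃ ∘L A ∘L P2i i‖ ^ 2 / |lam - lamhat i| with hS
  have hTr : T = ∑ i, r i / d i := hT
  have hSr : S = ∑ i, r i ^ 2 / d i := hS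
  have hTnn : 0 ≤ T := Finset.sum_nonneg fun i _ => div_nonneg (hrnn i) (hdpos i).le
  have hu2 : ‖P₂ u‖ ≤ T * ‖P₃ u‖ := by
    rw [hP₂u, hTr, Finset.sum_mul]
    exact (norm_sum_le _ _).trans (Finset.sum_le_sum fun i _ => hbound i)
  -- bound on ‖P₃ (A (P₂ u))‖
  have h5 : ‖P₃ (A (P₂ u))‖ ≤ S * ‖P₃ u‖ := by
    have hdec : P₃ (A (P₂ u)) = ∑ i, (P₃ ∘L A ∘L P2i i) (P2i i u) := by
      rw [hP₂u, map_sum, map_sum]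
      refine Finset.sum_congr rfl fun i _ => ?_
      have hPP : P2i i (P2i i u) = P2i i u := by
        have := congrArg (fun T : H →L[ℂ] H => T u) (hP2iidem i)
        simpa using this
      simp only [ContinuousLinearMap.comp_apply, hPP]
    rw [hdec, hSr, Finset.sum_mul]
    refine (norm_sum_le _ _).trans (Finset.sum_le_sum fun i _ => ?_)
    calc ‖(P₃ ∘L A ∘L P2i i) (P2i i u)‖ ≤ r i * ‖P2i i u‖ :=
          ContinuousLinearMap.le_opNorm _ _
      _ ≤ r i * (r i / d i * ‖P₃ u‖) := by
          exact mul_le_mul_of_nonneg_left (hbound i) (hrnn i)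
      _ = r i ^ 2 / d i * ‖P₃ u‖ := by ring
  -- Gap inequality
  have hmem : P₃ u ∈ Set.range ⇑P₃ := ⟨u, rfl⟩
  have h6 : Gap * ‖P₃ u‖ ≤ ‖P₃ (A (P₃ u)) - (lam : ℂ) • P₃ u‖ := hGapb _ hmem
  have h7 : P₃ (A (P₃ u)) - (lam : ℂ) • P₃ u = -(P₃ (A (P₁ u)) + P₃ (A (P₂ u))) := by
    have hlam : (lam : ℂ) • P₃ u = P₃ (A (P₁ u)) + P₃ (A (P₂ u)) + P₃ (A (P₃ u)) := by
      have : (lam : ℂ) • P₃ u = P₃ (A u) := by rw [hAu, map_smul]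
      rw [this]
      conv_lhs => rw [← hu_decomp]
      simp only [map_add]
    rw [hlam]; abel
  have h8 : ‖P₃ (A (P₁ u))‖ ≤ ‖P₃ ∘L A ∘L P₁‖ := by
    have heq : P₃ (A (P₁ u)) = (P₃ ∘L A ∘L P₁) u := rfl
    rw [heq]
    calc ‖(P₃ ∘L A ∘L P₁) u‖ ≤ ‖P₃ ∘L A ∘L P₁‖ * ‖u‖ := ContinuousLinearMap.le_opNorm _ _
      _ = ‖P₃ ∘L A ∘L P₁‖ := by rw [hu, mul_one]
  have h9 : Gap * ‖P₃ u‖ ≤ ‖P₃ ∘L A ∘L P₁‖ + S * ‖P₃ u‖ := by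
    refine h6.trans ?_
    rw [h7, norm_neg]
    exact (norm_add_le _ _).trans (add_le_add h8 h5)
  have hGS : 0 < Gap - S := sub_pos.mpr hGap
  have hu3 : ‖P₃ u‖ ≤ ‖P₃ ∘L A ∘L P₁‖ / (Gap - S) := by
    rw [le_div_iff₀ hGS]
    nlinarith [h9]
  -- final combination
  have hsq : ‖P₂ u‖ ^ 2 ≤ (T * ‖P₃ u‖) ^ 2 :=
    pow_le_pow_left₀ (norm_nonneg (P₂ u)) hu2 2
  have hfin : ‖P₂ u‖ ^ 2 + ‖P₃ u‖ ^ 2 ≤ (1 + T ^ 2) * ‖P₃ u‖ ^ 2 := by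
    have hring : (1 + T ^ 2) * ‖P₃ u‖ ^ 2 = (T * ‖P₃ u‖) ^ 2 + ‖P₃ u‖ ^ 2 := by ring
    rw [hring]
    linarith [hsq]
  show Real.sqrt (‖P₂ u‖ ^ 2 + ‖P₃ u‖ ^ 2) ≤
      ‖P₃ ∘L A ∘L P₁‖ / (Gap - S) * Real.sqrt (1 + T ^ 2)
  calc Real.sqrt (‖P₂ u‖ ^ 2 + ‖P₃ u‖ ^ 2)
      ≤ Real.sqrt ((1 + T ^ 2) * ‖P₃ u‖ ^ 2) := Real.sqrt_le_sqrt hfin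
    _ = ‖P₃ u‖ * Real.sqrt (1 + T ^ 2) := by
        rw [Real.sqrt_mul (add_nonneg zero_le_one (sq_nonneg T)), Real.sqrt_sq (norm_nonneg _)]
        ring
    _ ≤ ‖P₃ ∘L A ∘L P₁‖ / (Gap - S) * Real.sqrt (1 + T ^ 2) :=
        mul_le_mul_of_nonneg_right hu3 (Real.sqrt_nonneg _)
end
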